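/- arXiv:2502.14863 — 6 statements merged into one kernel-verified Lean document; each statement's English description precedes it below -/
import Mathlib

section
/- The sum over all compositions (m_1,...,m_n) of n (i.e. nonnegative integers with Σ_{k=1}^n k·m_k = n) of Π_{k=1}^n (θ/k)^{m_k}/m_k! equals the binomial coefficient C(n+θ-1, θ-1). -/
noncomputable def ewA (θ : ℝ) (d : ℕ) : ℝ :=
  Real.Gamma (d + θ) / (Real.Gamma θ * d.factorial)

lemma ewA_zero (θ : ℝ) (hθ : 0 < θ) : ewA θ 0 = 1 := by
  simp [ewA, (Real.Gamma_pos_of_pos hθ).ne']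

lemma ewA_rec (θ : ℝ) (hθ : 0 < θ) (d : ℕ) (hd : 1 ≤ d) :
    (d : ℝ) * ewA θ d = θ * ∑ j ∈ Finset.range d, ewA θ j := by
  induction d with
  | zero => omega
  | succ d ih =>
    rcases Nat.eq_zero_or_pos d with h | h
    · subst h
      have h1 : (0:ℝ) + θ ≠ 0 := by positivity
      have : (1:ℝ) + θ = θ + 1 := by ring
      simp [ewA, this, Real.Gamma_add_one (by positivity : θ ≠ 0),
        (Real.Gamma_pos_of_pos hθ).ne', mul_comm]
    · have key : ((d:ℝ) + 1) * ewA θ (d+1) = ((d:ℝ) + θ) * ewA θ d := by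
        have hne : (d:ℝ) + θ ≠ 0 := by positivity
        have hg : Real.Gamma ((d+1 : ℕ) + θ) = ((d:ℝ) + θ) * Real.Gamma (d + θ) := by
          have : ((d+1 : ℕ) : ℝ) + θ = ((d:ℝ) + θ) + 1 := by push_cast; ring
          rw [this, Real.Gamma_add_one hne]
        rw [ewA, ewA, hg, Nat.factorial_succ]
        have hfac : ((d+1).factorial : ℝ) ≠ 0 := by positivity
        field_simp
        push_cast; ring
      rw [Finset.sum_range_succ, mul_add, ← ih h]
      push_cast
      rw [key]
      ring

noncomputable def ewW (θ : ℝ) (N d : ℕ) : ℝ :=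
  ∑ m ∈ (Finset.univ : Finset (Fin N → Fin (N + 1))).filter
      (fun m => ∑ k : Fin N, (k.1 + 1) * (m k).1 = d),
    ∏ k : Fin N, (θ / (k.1 + 1)) ^ ((m k : ℕ)) / ((m k : ℕ).factorial : ℝ)

lemma ewW_zero (θ : ℝ) (N : ℕ) : ewW θ N 0 = 1 := by
  rw [ewW]
  have h : (Finset.univ : Finset (Fin N → Fin (N + 1))).filter
      (fun m => ∑ k : Fin N, (k.1 + 1) * (m k).1 = 0) = {fun _ => (0 : Fin (N+1))} := by
    ext m
    simp only [Finset.mem_filter, Finset.mem_univ, true_and, Finset.mem_singleton,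
      Finset.sum_eq_zero_iff]
    constructor
    · intro h
      funext k
      have hk := h k trivial
      simp only [Nat.mul_eq_zero] at hk
      have h0 : (m k).1 = 0 := by omega
      exact Fin.ext (by simpa using h0)
    · intro h k _
      simp [h]
  rw [h]
  simp


lemma ewW_key (θ : ℝ) (N d : ℕ) (hdN : d ≤ N) (k : Fin N) (hk : k.1 + 1 ≤ d) :
    ∑ m ∈ (Finset.univ : Finset (Fin N → Fin (N + 1))).filter
        (fun m => ∑ j : Fin N, (j.1 + 1) * (m j).1 = d),
      (((k.1 + 1) * (m k).1 : ℕ) : ℝ) *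
        ∏ j : Fin N, (θ / (j.1 + 1)) ^ ((m j : ℕ)) / ((m j : ℕ).factorial : ℝ)
      = θ * ewW θ N (d - (k.1 + 1)) := by
  classical
  have hsum : ∀ (m : Fin N → Fin (N+1)) (v : Fin (N+1)),
      ∑ j : Fin N, (j.1 + 1) * ((Function.update m k v) j).1
      = (k.1 + 1) * v.1 + ∑ j ∈ Finset.univ.erase k, (j.1 + 1) * (m j).1 := by
    intro m v
    rw [← Finset.add_sum_erase _ _ (Finset.mem_univ k), Function.update_self]
    congr 1
    refine Finset.sum_congr rfl fun j hj => ?_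
    rw [Function.update_of_ne (Finset.ne_of_mem_erase hj)]
  have hsplit : ∀ (m : Fin N → Fin (N+1)),
      ∑ j : Fin N, (j.1 + 1) * (m j).1
      = (k.1 + 1) * (m k).1 + ∑ j ∈ Finset.univ.erase k, (j.1 + 1) * (m j).1 :=
    fun m => (Finset.add_sum_erase _ _ (Finset.mem_univ k)).symm
  have hprod : ∀ (m : Fin N → Fin (N+1)) (v : Fin (N+1)),
      (∏ j : Fin N, (θ / (j.1 + 1)) ^ (((Function.update m k v) j : ℕ)) /
        (((Function.update m k v) j : ℕ).factorial : ℝ))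
      = ((θ / (k.1 + 1)) ^ (v.1) / ((v.1).factorial : ℝ)) *
        ∏ j ∈ Finset.univ.erase k,
          (θ / (j.1 + 1)) ^ ((m j : ℕ)) / ((m j : ℕ).factorial : ℝ) := by
    intro m v
    rw [← Finset.mul_prod_erase _ _ (Finset.mem_univ k), Function.update_self]
    congr 1
    refine Finset.prod_congr rfl fun j hj => ?_
    rw [Function.update_of_ne (Finset.ne_of_mem_erase hj)]
  have hprodsplit : ∀ (m : Fin N → Fin (N+1)),
      (∏ j : Fin N, (θ / (j.1 + 1)) ^ ((m j : ℕ)) / ((m j : ℕ).factorial : ℝ))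
      = ((θ / (k.1 + 1)) ^ ((m k).1) / (((m k).1).factorial : ℝ)) *
        ∏ j ∈ Finset.univ.erase k,
          (θ / (j.1 + 1)) ^ ((m j : ℕ)) / ((m j : ℕ).factorial : ℝ) :=
    fun m => (Finset.mul_prod_erase _ _ (Finset.mem_univ k)).symm
  have hres :
      ∑ m ∈ (Finset.univ : Finset (Fin N → Fin (N + 1))).filter
          (fun m => ∑ j : Fin N, (j.1 + 1) * (m j).1 = d),
        (((k.1 + 1) * (m k).1 : ℕ) : ℝ) *
          ∏ j : Fin N, (θ / (j.1 + 1)) ^ ((m j : ℕ)) / ((m j : ℕ).factorial : ℝ)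
      = ∑ m ∈ (Finset.univ : Finset (Fin N → Fin (N + 1))).filter
          (fun m => (∑ j : Fin N, (j.1 + 1) * (m j).1 = d) ∧ (m k).1 ≠ 0),
        (((k.1 + 1) * (m k).1 : ℕ) : ℝ) *
          ∏ j : Fin N, (θ / (j.1 + 1)) ^ ((m j : ℕ)) / ((m j : ℕ).factorial : ℝ) := by
    symm
    apply Finset.sum_subset
    · intro m hm
      simp only [Finset.mem_filter, Finset.mem_univ, true_and] at hm ⊢
      exact hm.1
    · intro m hm hnm
      simp only [Finset.mem_filter, Finset.mem_univ, true_and] at hm hnm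
      have h0 : (m k).1 = 0 := by
        by_contra h
        exact hnm ⟨hm, h⟩
      simp [h0]
  rw [hres, ewW, Finset.mul_sum]
  refine Finset.sum_nbij'
    (i := fun m => Function.update m k ⟨(m k).1 - 1, by have := (m k).isLt; omega⟩)
    (j := fun m => Function.update m k
      ⟨min ((m k).1 + 1) N, Nat.lt_succ_of_le (Nat.min_le_right _ _)⟩)
    ?_ ?_ ?_ ?_ ?_
  · intro a ha
    simp only [Finset.mem_filter, Finset.mem_univ, true_and] at ha ⊢
    obtain ⟨hsd, hne⟩ := ha
    rw [hsum]
    simp only [Fin.val_mk]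
    rw [hsplit a] at hsd
    have h1 : (k.1 + 1) * ((a k).1 - 1) + (k.1 + 1) * 1 = (k.1 + 1) * (a k).1 := by
      rw [← Nat.mul_add]
      congr 1
      omega
    omega
  · intro a ha
    simp only [Finset.mem_filter, Finset.mem_univ, true_and] at ha ⊢
    have hb : (k.1 + 1) * (a k).1 ≤ d - (k.1 + 1) := by
      rw [← ha]
      exact Finset.single_le_sum (f := fun j : Fin N => (j.1 + 1) * (a j).1)
        (fun j _ => Nat.zero_le _) (Finset.mem_univ k)
    have hak : (a k).1 + 1 ≤ N := by
      have : (a k).1 ≤ (k.1 + 1) * (a k).1 := Nat.le_mul_of_pos_left _ (by omega)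
      omega
    rw [hsplit a] at ha
    constructor
    · rw [hsum]
      simp only [Fin.val_mk]
      rw [min_eq_left hak]
      have h1 : (k.1 + 1) * ((a k).1 + 1) = (k.1 + 1) * (a k).1 + (k.1 + 1) * 1 := by
        rw [← Nat.mul_add]
      omega
    · simp only [Function.update_self, Fin.val_mk]
      omega
  · intro a ha
    simp only [Finset.mem_filter, Finset.mem_univ, true_and] at ha
    obtain ⟨hsd, hne⟩ := ha
    have hak : (a k).1 ≤ N := by
      have : (a k).1 ≤ (k.1 + 1) * (a k).1 := Nat.le_mul_of_pos_left _ (by omega)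
      rw [hsplit a] at hsd
      omega
    funext j
    rcases eq_or_ne j k with rfl | hj
    · simp only [Function.update_self]
      apply Fin.ext
      simp only [Fin.val_mk, Function.update_self]
      omega
    · simp [Function.update_of_ne hj]
  · intro a ha
    simp only [Finset.mem_filter, Finset.mem_univ, true_and] at ha
    have hb : (k.1 + 1) * (a k).1 ≤ d - (k.1 + 1) := by
      rw [← ha]
      exact Finset.single_le_sum (f := fun j : Fin N => (j.1 + 1) * (a j).1)
        (fun j _ => Nat.zero_le _) (Finset.mem_univ k)
    have hak : (a k).1 + 1 ≤ N := by
      have : (a k).1 ≤ (k.1 + 1) * (a k).1 := Nat.le_mul_of_pos_left _ (by omega)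
      omega
    funext j
    rcases eq_or_ne j k with rfl | hj
    · simp only [Function.update_self]
      apply Fin.ext
      simp only [Fin.val_mk, Function.update_self]
      omega
    · simp [Function.update_of_ne hj]
  · intro a ha
    simp only [Finset.mem_filter, Finset.mem_univ, true_and] at ha
    obtain ⟨hsd, hne⟩ := ha
    rw [hprodsplit a, hprod]
    simp only [Fin.val_mk]
    have hkR : ((k.1 : ℝ) + 1) ≠ 0 := by positivity
    obtain ⟨c, hc⟩ : ∃ c, (a k).1 = c + 1 := ⟨(a k).1 - 1, by omega⟩
    rw [hc]
    have hfac : ((c + 1).factorial : ℝ) = (c + 1) * (c.factorial : ℝ) := by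
      rw [Nat.factorial_succ]; push_cast; ring
    have hfne : (c.factorial : ℝ) ≠ 0 := by positivity
    simp only [Nat.add_sub_cancel, pow_succ, hfac]
    push_cast
    field_simp

lemma ewW_rec (θ : ℝ) (N d : ℕ) (hd : 1 ≤ d) (hdN : d ≤ N) :
    (d : ℝ) * ewW θ N d = θ * ∑ j ∈ Finset.range d, ewW θ N j := by
  classical
  rw [ewW, Finset.mul_sum]
  have step1 :
      ∑ m ∈ (Finset.univ : Finset (Fin N → Fin (N + 1))).filter
          (fun m => ∑ k : Fin N, (k.1 + 1) * (m k).1 = d),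
        (d : ℝ) * ∏ k : Fin N, (θ / (k.1 + 1)) ^ ((m k : ℕ)) / ((m k : ℕ).factorial : ℝ)
      = ∑ k : Fin N, ∑ m ∈ (Finset.univ : Finset (Fin N → Fin (N + 1))).filter
          (fun m => ∑ j : Fin N, (j.1 + 1) * (m j).1 = d),
        (((k.1 + 1) * (m k).1 : ℕ) : ℝ) *
          ∏ j : Fin N, (θ / (j.1 + 1)) ^ ((m j : ℕ)) / ((m j : ℕ).factorial : ℝ) := by
    rw [Finset.sum_comm]
    refine Finset.sum_congr rfl fun m hm => ?_
    simp only [Finset.mem_filter, Finset.mem_univ, true_and] at hm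
    rw [← Finset.sum_mul, ← Nat.cast_sum, hm]
  rw [step1]
  have step2 : ∀ k : Fin N,
      (∑ m ∈ (Finset.univ : Finset (Fin N → Fin (N + 1))).filter
          (fun m => ∑ j : Fin N, (j.1 + 1) * (m j).1 = d),
        (((k.1 + 1) * (m k).1 : ℕ) : ℝ) *
          ∏ j : Fin N, (θ / (j.1 + 1)) ^ ((m j : ℕ)) / ((m j : ℕ).factorial : ℝ))
      = if k.1 + 1 ≤ d then θ * ewW θ N (d - (k.1 + 1)) else 0 := by
    intro k
    by_cases hkd : k.1 + 1 ≤ d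
    · rw [if_pos hkd]
      exact ewW_key θ N d hdN k hkd
    · rw [if_neg hkd]
      refine Finset.sum_eq_zero fun m hm => ?_
      simp only [Finset.mem_filter, Finset.mem_univ, true_and] at hm
      have hle : (k.1 + 1) * (m k).1 ≤ d := by
        rw [← hm]
        exact Finset.single_le_sum (f := fun j : Fin N => (j.1 + 1) * (m j).1)
          (fun j _ => Nat.zero_le _) (Finset.mem_univ k)
      have h0 : (m k).1 = 0 := by
        rcases Nat.eq_zero_or_pos (m k).1 with h | h
        · exact h
        · have : k.1 + 1 ≤ (k.1 + 1) * (m k).1 := Nat.le_mul_of_pos_right _ h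
          omega
      simp [h0]
  rw [Finset.sum_congr rfl fun k _ => step2 k]
  have step3 :
      ∑ k : Fin N, (if k.1 + 1 ≤ d then θ * ewW θ N (d - (k.1 + 1)) else 0)
      = ∑ i ∈ Finset.range N, (if i + 1 ≤ d then θ * ewW θ N (d - (i + 1)) else 0) :=
    Fin.sum_univ_eq_sum_range (fun i => if i + 1 ≤ d then θ * ewW θ N (d - (i + 1)) else 0) N
  rw [step3]
  rw [← Finset.sum_subset (Finset.range_subset_range.mpr hdN)
    (fun i _ hi => by
      rw [if_neg]
      simp only [Finset.mem_range, not_lt] at hi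
      omega)]
  rw [Finset.sum_congr rfl (fun i hi => by
    rw [if_pos]
    simp only [Finset.mem_range] at hi
    omega)]
  rw [← Finset.mul_sum]
  congr 1
  rw [← Finset.sum_range_reflect]
  refine Finset.sum_congr rfl fun i hi => ?_
  simp only [Finset.mem_range] at hi
  congr 1
  omega

lemma ewW_eq_ewA (θ : ℝ) (hθ : 0 < θ) (N : ℕ) :
    ∀ d, d ≤ N → ewW θ N d = ewA θ d := by
  intro d
  induction d using Nat.strong_induction_on with
  | _ d ih =>
    intro hdN
    rcases Nat.eq_zero_or_pos d with rfl | hd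
    · rw [ewW_zero, ewA_zero θ hθ]
    · have h1 := ewW_rec θ N d hd hdN
      have h2 := ewA_rec θ hθ d hd
      have hsum : ∑ j ∈ Finset.range d, ewW θ N j = ∑ j ∈ Finset.range d, ewA θ j :=
        Finset.sum_congr rfl fun j hj => ih j (Finset.mem_range.mp hj)
          (le_trans (le_of_lt (Finset.mem_range.mp hj)) hdN)
      have hdne : (d : ℝ) ≠ 0 := by positivity
      exact mul_left_cancel₀ hdne (by rw [h1, hsum, ← h2])

/-- The sum over all compositions `(m_1,…,m_n)` of `n` (nonnegative integers with
`∑_{k=1}^n k m_k = n`) of `∏_{k=1}^n (θ/k)^{m_k}/m_k!` equals the generalized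
binomial coefficient `C(n+θ-1, θ-1) = Γ(n+θ)/(Γ(θ) n!)`. -/
theorem sum_over_compositions_eq_ewens_normalization (θ : ℝ) (hθ : 0 < θ) (n : ℕ)
    (hn : 0 < n) :
    ∑ m ∈ (Finset.univ : Finset (Fin n → Fin (n + 1))).filter
        (fun m => ∑ k : Fin n, (k.1 + 1) * (m k).1 = n),
      ∏ k : Fin n, (θ / (k.1 + 1)) ^ ((m k : ℕ)) / ((m k : ℕ).factorial : ℝ)
      = Real.Gamma (n + θ) / (Real.Gamma θ * n.factorial) := by
  have h := ewW_eq_ewA θ hθ n n le_rfl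
  rw [ewW, ewA] at h
  exact h
end

section
/- For x > 0 and θ ∈ (0,1), the ratio Γ(x+θ)/Γ(x+1) is strictly less than x^{θ-1}. -/
open Real

/-- Hölder / log-convexity of Gamma, squared midpoint form. -/
lemma gamma_mid_sq_le (a b : ℝ) (ha : 0 < a) (hb : 0 < b) :
    Real.Gamma ((a + b) / 2) ^ 2 ≤ Real.Gamma a * Real.Gamma b := by
  have h := Real.Gamma_mul_add_mul_le_rpow_Gamma_mul_rpow_Gamma ha hb
    (by norm_num : (0:ℝ) < 1/2) (by norm_num : (0:ℝ) < 1/2) (by norm_num)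
  have h' : Real.Gamma ((a + b) / 2) ≤ Real.Gamma a ^ ((1:ℝ)/2) * Real.Gamma b ^ ((1:ℝ)/2) := by
    convert h using 2; ring
  have hGa := Real.Gamma_pos_of_pos ha
  have hGb := Real.Gamma_pos_of_pos hb
  calc Real.Gamma ((a + b) / 2) ^ 2
      ≤ (Real.Gamma a ^ ((1:ℝ)/2) * Real.Gamma b ^ ((1:ℝ)/2)) ^ 2 := by
        apply sq_le_sq' _ h'
        nlinarith [Real.Gamma_pos_of_pos (show 0 < (a+b)/2 by linarith),
          Real.rpow_pos_of_pos hGa ((1:ℝ)/2), Real.rpow_pos_of_pos hGb ((1:ℝ)/2)]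
    _ = Real.Gamma a * Real.Gamma b := by
        rw [mul_pow, ← Real.rpow_natCast (Real.Gamma a ^ ((1:ℝ)/2)) 2,
          ← Real.rpow_natCast (Real.Gamma b ^ ((1:ℝ)/2)) 2,
          ← Real.rpow_mul hGa.le, ← Real.rpow_mul hGb.le]
        norm_num

/-- If Γ(x+1/2)^2 ≥ Γ(x)·Γ(x+1), contradiction. -/
lemma gamma_half_contra (x : ℝ) (hx : 0 < x)
    (h : Real.Gamma x * Real.Gamma (x + 1) ≤ Real.Gamma (x + 1/2) ^ 2) : False := by
  have hGx := Real.Gamma_pos_of_pos hx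
  have hGh := Real.Gamma_pos_of_pos (show 0 < x + 1/2 by linarith)
  have h1 : Real.Gamma (x + 3/2) ^ 2 ≤ Real.Gamma (x + 1) * Real.Gamma (x + 2) := by
    have := gamma_mid_sq_le (x + 1) (x + 2) (by linarith) (by linarith)
    convert this using 3; ring
  have e1 : Real.Gamma (x + 3/2) = (x + 1/2) * Real.Gamma (x + 1/2) := by
    have := Real.Gamma_add_one (show x + 1/2 ≠ 0 by linarith)
    rw [show x + 3/2 = x + 1/2 + 1 by ring, this]
  have e2 : Real.Gamma (x + 1) = x * Real.Gamma x := by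
    rw [Real.Gamma_add_one hx.ne']
  have e3 : Real.Gamma (x + 2) = (x + 1) * Real.Gamma (x + 1) := by
    have := Real.Gamma_add_one (show x + 1 ≠ 0 by linarith)
    rw [show x + 2 = x + 1 + 1 by ring, this]
  rw [e1, e3, e2] at h1
  rw [e2] at h
  nlinarith [mul_le_mul_of_nonneg_left h (sq_nonneg (x + 1/2)), mul_pos hGx hGx, hx,
    mul_pos (mul_pos hx hx) (mul_pos hGx hGx)]

/-- For `x > 0` and `θ ∈ (0,1)`, the ratio `Γ(x+θ)/Γ(x+1)` is strictly less than
`x^(θ-1)`. -/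
theorem gamma_ratio_lt_rpow (x θ : ℝ) (hx : 0 < x) (hθ : θ ∈ Set.Ioo (0 : ℝ) 1) :
    Real.Gamma (x + θ) / Real.Gamma (x + 1) < x ^ (θ - 1) := by
  obtain ⟨hθ0, hθ1⟩ := hθ
  have hGx : 0 < Real.Gamma x := Real.Gamma_pos_of_pos hx
  have hGx1 : 0 < Real.Gamma (x + 1) := Real.Gamma_pos_of_pos (by linarith)
  have hGh : 0 < Real.Gamma (x + 1/2) := Real.Gamma_pos_of_pos (by linarith)
  -- weak inequality
  have hA : Real.Gamma (x + θ) ≤ Real.Gamma x ^ (1 - θ) * Real.Gamma (x + 1) ^ θ := by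
    have h := Real.Gamma_mul_add_mul_le_rpow_Gamma_mul_rpow_Gamma hx
      (show 0 < x + 1 by linarith) (show 0 < 1 - θ by linarith) hθ0 (by ring)
    convert h using 2; ring
  -- strictness
  have hne : Real.Gamma (x + θ) ≠ Real.Gamma x ^ (1 - θ) * Real.Gamma (x + 1) ^ θ := by
    intro heq
    apply gamma_half_contra x hx
    -- show Γx Γ(x+1) ≤ Γ(x+1/2)^2
    rcases lt_trichotomy θ (1/2) with hc | hc | hc
    · -- θ < 1/2 : Γ(x+θ) ≤ Γx^(1-2θ) Γ(x+1/2)^(2θ)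
      have hH : Real.Gamma (x + θ) ≤ Real.Gamma x ^ (1 - 2*θ) * Real.Gamma (x + 1/2) ^ (2*θ) := by
        have h := Real.Gamma_mul_add_mul_le_rpow_Gamma_mul_rpow_Gamma hx
          (show 0 < x + 1/2 by linarith) (show 0 < 1 - 2*θ by linarith)
          (show 0 < 2*θ by linarith) (by ring)
        convert h using 2; ring
      rw [heq] at hH
      have hsplit : Real.Gamma x ^ (1 - θ) = Real.Gamma x ^ (1 - 2*θ) * Real.Gamma x ^ θ := by
        rw [← Real.rpow_add hGx]; ring_nf
      rw [hsplit, mul_assoc] at hH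
      have hcancel : Real.Gamma x ^ θ * Real.Gamma (x + 1) ^ θ ≤ Real.Gamma (x + 1/2) ^ (2*θ) :=
        le_of_mul_le_mul_left hH (Real.rpow_pos_of_pos hGx _)
      rw [← Real.mul_rpow hGx.le hGx1.le] at hcancel
      have h2 : Real.Gamma (x + 1/2) ^ (2*θ) = (Real.Gamma (x + 1/2) ^ 2) ^ θ := by
        rw [← Real.rpow_natCast (Real.Gamma (x+1/2)) 2, ← Real.rpow_mul hGh.le]
        norm_num
      rw [h2] at hcancel
      exact (Real.rpow_le_rpow_iff (by positivity) (by positivity) hθ0).mp hcancel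
    · -- θ = 1/2
      subst hc
      rw [heq, show (1:ℝ) - 1/2 = 1/2 by norm_num, ← Real.mul_rpow hGx.le hGx1.le,
        ← Real.rpow_natCast ((Real.Gamma x * Real.Gamma (x+1)) ^ ((1:ℝ)/2)) 2,
        ← Real.rpow_mul (by positivity)]
      norm_num
    · -- θ > 1/2 : Γ(x+θ) ≤ Γ(x+1/2)^(2-2θ) Γ(x+1)^(2θ-1)
      have hH : Real.Gamma (x + θ) ≤
          Real.Gamma (x + 1/2) ^ (2 - 2*θ) * Real.Gamma (x + 1) ^ (2*θ - 1) := by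
        have h := Real.Gamma_mul_add_mul_le_rpow_Gamma_mul_rpow_Gamma
          (show 0 < x + 1/2 by linarith) (show 0 < x + 1 by linarith)
          (show 0 < 2 - 2*θ by linarith) (show 0 < 2*θ - 1 by linarith) (by ring)
        convert h using 2; ring
      rw [heq] at hH
      have hsplit : Real.Gamma (x+1) ^ θ = Real.Gamma (x+1) ^ (1 - θ) * Real.Gamma (x+1) ^ (2*θ - 1) := by
        rw [← Real.rpow_add hGx1]; ring_nf
      rw [hsplit, ← mul_assoc] at hH
      have hH' : Real.Gamma x ^ (1-θ) * Real.Gamma (x+1) ^ (1-θ) * Real.Gamma (x+1) ^ (2*θ-1)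
          ≤ Real.Gamma (x + 1/2) ^ (2 - 2*θ) * Real.Gamma (x + 1) ^ (2*θ - 1) := hH
      have hcancel : Real.Gamma x ^ (1-θ) * Real.Gamma (x+1) ^ (1-θ)
          ≤ Real.Gamma (x + 1/2) ^ (2 - 2*θ) :=
        le_of_mul_le_mul_right hH' (Real.rpow_pos_of_pos hGx1 _)
      rw [← Real.mul_rpow hGx.le hGx1.le] at hcancel
      have h2 : Real.Gamma (x + 1/2) ^ (2 - 2*θ) = (Real.Gamma (x + 1/2) ^ 2) ^ (1 - θ) := by
        rw [← Real.rpow_natCast (Real.Gamma (x+1/2)) 2, ← Real.rpow_mul hGh.le]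
        ring_nf
      rw [h2] at hcancel
      exact (Real.rpow_le_rpow_iff (by positivity) (by positivity) (by linarith)).mp hcancel
  -- combine
  rw [div_lt_iff₀ hGx1]
  have hB : Real.Gamma x ^ (1 - θ) * Real.Gamma (x + 1) ^ θ = x ^ (θ - 1) * Real.Gamma (x + 1) := by
    have e2 : Real.Gamma x = Real.Gamma (x + 1) / x := by
      rw [Real.Gamma_add_one hx.ne']; field_simp
    rw [e2, Real.div_rpow hGx1.le hx.le, div_eq_mul_inv, ← Real.rpow_neg hx.le,
      mul_comm (Real.Gamma (x+1) ^ (1-θ)), mul_assoc, ← Real.rpow_add hGx1]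
    rw [show -(1 - θ) = θ - 1 by ring, show (1 - θ) + θ = (1:ℝ) by ring, Real.rpow_one]
  calc Real.Gamma (x + θ) < Real.Gamma x ^ (1 - θ) * Real.Gamma (x + 1) ^ θ := lt_of_le_of_ne hA hne
    _ = x ^ (θ - 1) * Real.Gamma (x + 1) := hB
end

section
/- Let Z_1,...,Z_n be independent Poisson random variables with Z_j of mean θ/j. Then the conditional law of (Z_1,...,Z_n) given Σ_{j=1}^n j·Z_j = n assigns to each tuple (m_1,...,m_n) with Σ k·m_k = n the probability C(n+θ-1,θ-1)^{-1} · Π_{k=1}^n (θ/k)^{m_k}/m_k!. -/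
open MeasureTheory ProbabilityTheory

open Finset

namespace EwensAux

/-- solutions set -/
def ewS (n j : ℕ) : Finset (Fin n → ℕ) :=
  (Fintype.piFinset fun _ => Finset.range (n+1)).filter (fun f => ∑ k : Fin n, (k.1+1) * f k = j)

noncomputable def ewW (θ : ℝ) (n : ℕ) (f : Fin n → ℕ) : ℝ :=
  ∏ k : Fin n, (θ / (k.1+1)) ^ (f k) / (f k).factorial

noncomputable def ewB (θ : ℝ) (n j : ℕ) : ℝ := ∑ f ∈ ewS n j, ewW θ n f

noncomputable def asc (θ : ℝ) (j : ℕ) : ℝ := ∏ i ∈ range j, (θ + i)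

lemma mem_ewS {n j : ℕ} {f : Fin n → ℕ} :
    f ∈ ewS n j ↔ (∀ k, f k ≤ n) ∧ ∑ k : Fin n, (k.1+1) * f k = j := by
  simp [ewS, Fintype.mem_piFinset, Nat.lt_succ_iff]

lemma ewS_zero (n : ℕ) : ewS n 0 = {fun _ => 0} := by
  ext f
  simp only [mem_ewS, mem_singleton]
  constructor
  · rintro ⟨-, h⟩
    funext k
    have := Finset.sum_eq_zero_iff.mp h k (mem_univ k)
    exact (Nat.mul_eq_zero.mp this).resolve_left (by omega)
  · rintro rfl; simp

lemma ewB_zero (θ : ℝ) (n : ℕ) : ewB θ n 0 = 1 := by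
  simp [ewB, ewS_zero, ewW]

lemma asc_succ (θ : ℝ) (j : ℕ) : asc θ (j+1) = asc θ j * (θ + j) := by
  simp [asc, Finset.prod_range_succ]

lemma asc_pos {θ : ℝ} (hθ : 0 < θ) (j : ℕ) : 0 < asc θ j := by
  refine Finset.prod_pos fun i _ => ?_
  positivity

/-- key identity for ascending factorials -/
lemma asc_sum (θ : ℝ) (j : ℕ) :
    θ * ∑ l ∈ range j, asc θ l / l.factorial = j * (asc θ j / j.factorial) := by
  induction j with
  | zero => simp
  | succ j ih =>
    rw [Finset.sum_range_succ, mul_add, ih, asc_succ]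
    have hj : (j.factorial : ℝ) ≠ 0 := Nat.cast_ne_zero.mpr j.factorial_ne_zero
    push_cast [Nat.factorial_succ]
    field_simp
    ring


lemma sum_coef_split (n : ℕ) (f : Fin n → ℕ) (k : Fin n) :
    ∑ i : Fin n, (i.1+1) * f i = (k.1+1) * f k + ∑ i ∈ univ.erase k, (i.1+1) * f i := by
  rw [← Finset.add_sum_erase _ _ (mem_univ k)]

lemma sum_coef_update (n : ℕ) (f : Fin n → ℕ) (k : Fin n) (v : ℕ) :
    ∑ i : Fin n, (i.1+1) * (Function.update f k v) i
      = (k.1+1) * v + ∑ i ∈ univ.erase k, (i.1+1) * f i := by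
  rw [sum_coef_split n _ k, Function.update_self]
  congr 1
  refine Finset.sum_congr rfl fun i hi => ?_
  rw [Function.update_of_ne (Finset.ne_of_mem_erase hi)]

lemma ewW_split (θ : ℝ) (n : ℕ) (f : Fin n → ℕ) (k : Fin n) :
    ewW θ n f = ((θ/(k.1+1)) ^ (f k) / (f k).factorial) *
      ∏ i ∈ univ.erase k, (θ/(i.1+1)) ^ (f i) / (f i).factorial := by
  rw [ewW, ← Finset.mul_prod_erase _ _ (mem_univ k)]

lemma ewW_update (θ : ℝ) (n : ℕ) (f : Fin n → ℕ) (k : Fin n) (v : ℕ) :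
    ewW θ n (Function.update f k v) = ((θ/(k.1+1)) ^ v / v.factorial) *
      ∏ i ∈ univ.erase k, (θ/(i.1+1)) ^ (f i) / (f i).factorial := by
  rw [ewW_split θ n _ k, Function.update_self]
  congr 1
  refine Finset.prod_congr rfl fun i hi => ?_
  rw [Function.update_of_ne (Finset.ne_of_mem_erase hi)]

lemma inner_zero (θ : ℝ) (n j : ℕ) (k : Fin n) (hk : j < k.1 + 1) :
    ∑ f ∈ ewS n j, ((k.1+1) * f k : ℝ) * ewW θ n f = 0 := by
  refine Finset.sum_eq_zero fun f hf => ?_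
  rcases mem_ewS.mp hf with ⟨-, hsum⟩
  have hle : (k.1+1) * f k ≤ j := hsum ▸ Finset.single_le_sum
    (f := fun i : Fin n => (i.1+1) * f i) (fun i _ => Nat.zero_le _) (mem_univ k)
  have : f k = 0 := by nlinarith [hle, hk]
  simp [this]

lemma inner_eq (θ : ℝ) (hθ : 0 < θ) (n j : ℕ) (k : Fin n) (hk : k.1 + 1 ≤ j) (hj : j ≤ n) :
    ∑ f ∈ ewS n j, ((k.1+1) * f k : ℝ) * ewW θ n f = θ * ewB θ n (j - (k.1+1)) := by
  have hfil : ∑ f ∈ (ewS n j).filter (fun f => 0 < f k), ((k.1+1) * f k : ℝ) * ewW θ n f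
      = ∑ f ∈ ewS n j, ((k.1+1) * f k : ℝ) * ewW θ n f :=
    Finset.sum_filter_of_ne (fun f _ hne => by
      by_contra h
      push_neg at h
      interval_cases h' : f k
      · simp [h'] at hne
      )
  rw [← hfil, ewB, Finset.mul_sum]
  refine Finset.sum_nbij' (i := fun f => Function.update f k (f k - 1))
    (j := fun g => Function.update g k (g k + 1)) ?_ ?_ ?_ ?_ ?_
  · intro f hf
    rw [mem_filter, mem_ewS] at hf
    obtain ⟨⟨hle, hsum⟩, hpos⟩ := hf
    obtain ⟨c, hc⟩ : ∃ c, f k = c + 1 := ⟨f k - 1, by omega⟩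
    rw [mem_ewS]
    constructor
    · intro i
      rcases eq_or_ne i k with rfl | hik
      · rw [Function.update_self]; have := hle i; omega
      · rw [Function.update_of_ne hik]; exact hle i
    · rw [sum_coef_update]
      have hsplit := sum_coef_split n f k
      have hmul : (k.1+1)*(c+1) = (k.1+1)*c + (k.1+1) := by ring
      rw [hc] at hsplit
      rw [hc]
      simp only [Nat.add_sub_cancel]
      omega
  · intro g hg
    rw [mem_ewS] at hg
    obtain ⟨hle, hsum⟩ := hg
    have hgk : (k.1+1) * g k ≤ j - (k.1+1) := hsum ▸ Finset.single_le_sum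
      (f := fun i : Fin n => (i.1+1) * g i) (fun i _ => Nat.zero_le _) (mem_univ k)
    have hgk2 : g k ≤ (k.1+1) * g k := Nat.le_mul_of_pos_left (g k) (by omega)
    rw [mem_filter, mem_ewS]
    refine ⟨⟨fun i => ?_, ?_⟩, ?_⟩
    · rcases eq_or_ne i k with rfl | hik
      · rw [Function.update_self]; omega
      · rw [Function.update_of_ne hik]; exact hle i
    · rw [sum_coef_update]
      have hsplit := sum_coef_split n g k
      have hmul : (k.1+1)*(g k + 1) = (k.1+1)*(g k) + (k.1+1) := by ring
      omega
    · rw [Function.update_self]; omega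
  · intro f hf
    rw [mem_filter] at hf
    funext i
    rcases eq_or_ne i k with rfl | hik
    · rw [Function.update_self, Function.update_self]
      omega
    · rw [Function.update_of_ne hik, Function.update_of_ne hik]
  · intro g hg
    funext i
    rcases eq_or_ne i k with rfl | hik
    · rw [Function.update_self, Function.update_self]
      omega
    · rw [Function.update_of_ne hik, Function.update_of_ne hik]
  · intro f hf
    rw [mem_filter] at hf
    obtain ⟨hf', hpos⟩ := hf
    obtain ⟨c, hc⟩ : ∃ c, f k = c + 1 := ⟨f k - 1, by omega⟩
    rw [ewW_split θ n f k, ewW_update]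
    have h1 : f k - 1 = c := by omega
    rw [h1, hc]
    have hk1 : ((k.1:ℝ) + 1) ≠ 0 := by positivity
    have hcf : ((c+1).factorial : ℝ) = (c+1) * c.factorial := by
      push_cast [Nat.factorial_succ]; ring
    have hcf0 : (c.factorial : ℝ) ≠ 0 := Nat.cast_ne_zero.mpr c.factorial_ne_zero
    rw [hcf]
    push_cast
    rw [pow_succ]
    field_simp

lemma ewB_rec (θ : ℝ) (hθ : 0 < θ) (n j : ℕ) (hj1 : 1 ≤ j) (hjn : j ≤ n) :
    (j : ℝ) * ewB θ n j = θ * ∑ l ∈ range j, ewB θ n l := by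
  have step1 : (j : ℝ) * ewB θ n j
      = ∑ k : Fin n, ∑ f ∈ ewS n j, ((k.1+1) * f k : ℝ) * ewW θ n f := by
    rw [ewB, Finset.mul_sum, Finset.sum_comm]
    refine Finset.sum_congr rfl fun f hf => ?_
    rcases mem_ewS.mp hf with ⟨-, hsum⟩
    rw [← Finset.sum_mul]
    congr 1
    rw [← hsum]
    push_cast
    ring
  rw [step1]
  have step2 : ∀ k : Fin n, ∑ f ∈ ewS n j, ((k.1+1) * f k : ℝ) * ewW θ n f
      = if k.1 + 1 ≤ j then θ * ewB θ n (j - (k.1+1)) else 0 := by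
    intro k
    split_ifs with h
    · exact inner_eq θ hθ n j k h hjn
    · exact inner_zero θ n j k (by omega)
  rw [Finset.sum_congr rfl fun k _ => step2 k]
  rw [Fin.sum_univ_eq_sum_range (fun k => if k + 1 ≤ j then θ * ewB θ n (j - (k+1)) else 0) n]
  rw [← Finset.sum_subset (Finset.range_subset_range.mpr hjn)
    (fun k _ hk => by rw [if_neg]; rw [mem_range] at hk; omega)]
  rw [Finset.mul_sum]
  have : ∀ k ∈ range j, (if k + 1 ≤ j then θ * ewB θ n (j - (k+1)) else 0)
      = θ * ewB θ n (j - 1 - k) := by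
    intro k hk
    rw [mem_range] at hk
    rw [if_pos (by omega)]
    congr 2
    omega
  rw [Finset.sum_congr rfl this, Finset.sum_range_reflect (fun l => θ * ewB θ n l) j]

lemma ewB_eq (θ : ℝ) (hθ : 0 < θ) (n : ℕ) :
    ∀ j, j ≤ n → ewB θ n j = asc θ j / j.factorial := by
  intro j
  induction j using Nat.strong_induction_on with
  | _ j ih =>
    intro hjn
    rcases Nat.eq_zero_or_pos j with rfl | hj1
    · simp [ewB_zero, asc]
    · have hrec := ewB_rec θ hθ n j hj1 hjn
      have hsum : ∑ l ∈ range j, ewB θ n l = ∑ l ∈ range j, asc θ l / l.factorial :=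
        Finset.sum_congr rfl fun l hl => ih l (mem_range.mp hl) (by rw [mem_range] at hl; omega)
      rw [hsum, asc_sum] at hrec
      have hj0 : (j : ℝ) ≠ 0 := Nat.cast_ne_zero.mpr (by omega)
      exact mul_left_cancel₀ hj0 hrec


lemma gamma_asc {θ : ℝ} (hθ : 0 < θ) (n : ℕ) :
    Real.Gamma (n + θ) = asc θ n * Real.Gamma θ := by
  induction n with
  | zero => simp [asc]
  | succ n ih =>
    have h0 : (n:ℝ) + θ ≠ 0 := by positivity
    have hcast : ((n+1 : ℕ):ℝ) + θ = ((n:ℝ) + θ) + 1 := by push_cast; ring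
    rw [hcast, Real.Gamma_add_one h0, ih, asc_succ]
    ring

end EwensAux

/-- The conditional law of independent `Z_j ~ Poisson(θ/j)`, `1 ≤ j ≤ n`, given
`∑ j Z_j = n`, is the Ewens sampling formula: it assigns to each `(m_1,…,m_n)` with
`∑ k m_k = n` the probability `C(n+θ-1,θ-1)⁻¹ ∏ (θ/k)^{m_k}/m_k!`, where
`C(n+θ-1,θ-1) = Γ(n+θ)/(Γ(θ) n!)`. -/
theorem conditioned_poisson_eq_ewens
    {Ω : Type*} [MeasurableSpace Ω] (μ : Measure Ω) [IsProbabilityMeasure μ]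
    (θ : ℝ) (hθ : 0 < θ) (n : ℕ) (hn : 1 ≤ n) (Z : Fin n → Ω → ℕ)
    (hmeas : ∀ j, Measurable (Z j))
    (hindep : iIndepFun Z μ)
    (hlaw : ∀ j : Fin n,
      Measure.map (Z j) μ = (poissonPMF (Real.toNNReal (θ / (j.1 + 1)))).toMeasure)
    (m : Fin n → ℕ) (hm : ∑ k : Fin n, (k.1 + 1) * m k = n) :
    (μ[|{ω | ∑ j : Fin n, (j.1 + 1) * Z j ω = n}]) {ω | ∀ k, Z k ω = m k}
      = ENNReal.ofReal
          ((Real.Gamma θ * n.factorial / Real.Gamma (n + θ)) *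
            ∏ k : Fin n, (θ / (k.1 + 1)) ^ (m k) / ((m k).factorial : ℝ)) := by
  classical
  set B : Set Ω := {ω | ∑ j : Fin n, (j.1 + 1) * Z j ω = n} with hB
  have hr : ∀ k : Fin n, ((Real.toNNReal (θ / (k.1 + 1))) : ℝ) = θ / (k.1 + 1) := fun k =>
    Real.coe_toNNReal _ (by positivity)
  set E : ℝ := ∏ k : Fin n, Real.exp (-(θ / (k.1 + 1))) with hE
  have hEpos : 0 < E := Finset.prod_pos fun k _ => Real.exp_pos _
  have hpoint : ∀ f : Fin n → ℕ,
      μ {ω | ∀ k, Z k ω = f k} = ENNReal.ofReal (E * EwensAux.ewW θ n f) := by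
    intro f
    have hset : {ω | ∀ k, Z k ω = f k} = ⋂ k, Z k ⁻¹' {f k} := by
      ext ω; simp [Set.mem_iInter]
    rw [hset, hindep.meas_iInter (fun k => ⟨{f k}, measurableSet_singleton _, rfl⟩)]
    have h1 : ∀ k : Fin n, μ (Z k ⁻¹' {f k})
        = ENNReal.ofReal (poissonPMFReal (Real.toNNReal (θ / (k.1 + 1))) (f k)) := by
      intro k
      rw [← Measure.map_apply (hmeas k) (measurableSet_singleton _), hlaw k,
        PMF.toMeasure_apply_singleton _ _ (measurableSet_singleton _)]
      rfl
    rw [Finset.prod_congr rfl fun k _ => h1 k,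
      ← ENNReal.ofReal_prod_of_nonneg (fun k _ => poissonPMFReal_nonneg)]
    congr 1
    rw [EwensAux.ewW, hE, ← Finset.prod_mul_distrib]
    refine Finset.prod_congr rfl fun k _ => ?_
    simp only [poissonPMFReal]
    rw [hr k, mul_div_assoc]
  have hA : ∀ f : Fin n → ℕ, MeasurableSet {ω | ∀ k, Z k ω = f k} := by
    intro f
    have hset : {ω | ∀ k, Z k ω = f k} = ⋂ k, Z k ⁻¹' {f k} := by
      ext ω; simp [Set.mem_iInter]
    rw [hset]
    exact MeasurableSet.iInter fun k => (hmeas k) (measurableSet_singleton _)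
  have hBset : B = ⋃ f ∈ EwensAux.ewS n n, {ω | ∀ k, Z k ω = f k} := by
    ext ω
    simp only [hB, Set.mem_setOf_eq, Set.mem_iUnion]
    constructor
    · intro h
      refine ⟨fun k => Z k ω, ?_, fun k => rfl⟩
      rw [EwensAux.mem_ewS]
      refine ⟨fun k => ?_, h⟩
      have h1 : (k.1+1) * Z k ω ≤ ∑ i : Fin n, (i.1+1) * Z i ω := Finset.single_le_sum
        (f := fun i : Fin n => (i.1+1) * Z i ω) (fun i _ => Nat.zero_le _) (Finset.mem_univ k)
      have h2 : Z k ω ≤ (k.1+1) * Z k ω := Nat.le_mul_of_pos_left _ (by omega)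
      omega
    · rintro ⟨f, hf, hfe⟩
      rw [EwensAux.mem_ewS] at hf
      rw [Finset.sum_congr rfl fun k _ => by rw [hfe k]]
      exact hf.2
  have hdisj : (↑(EwensAux.ewS n n) : Set (Fin n → ℕ)).PairwiseDisjoint
      (fun f => {ω | ∀ k, Z k ω = f k}) := by
    intro f _ g _ hfg
    refine Set.disjoint_left.mpr fun ω hωf hωg => hfg (funext fun k => ?_)
    rw [← hωf k, ← hωg k]
  have hμB : μ B = ENNReal.ofReal (E * EwensAux.ewB θ n n) := by
    rw [hBset, measure_biUnion_finset hdisj (fun f _ => hA f),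
      Finset.sum_congr rfl fun f _ => hpoint f,
      ← ENNReal.ofReal_sum_of_nonneg (fun f _ => by
        have : 0 ≤ EwensAux.ewW θ n f := Finset.prod_nonneg fun k _ => by positivity
        positivity)]
    rw [EwensAux.ewB, Finset.mul_sum]
  have hBmeas : MeasurableSet B := by
    have hms : Measurable fun ω => ∑ j : Fin n, (j.1 + 1) * Z j ω :=
      Finset.measurable_sum _ fun j _ => (hmeas j).const_mul _
    exact hms (measurableSet_singleton n)
  have hsub : {ω | ∀ k, Z k ω = m k} ⊆ B := by
    intro ω hω
    simp only [hB, Set.mem_setOf_eq]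
    rw [Finset.sum_congr rfl fun k _ => by rw [hω k]]
    exact hm
  rw [cond_apply hBmeas μ, Set.inter_eq_self_of_subset_right hsub, hpoint m, hμB]
  have hb : EwensAux.ewB θ n n = EwensAux.asc θ n / n.factorial :=
    EwensAux.ewB_eq θ hθ n n le_rfl
  have hascpos := EwensAux.asc_pos hθ n
  have hfac : (0:ℝ) < n.factorial := by positivity
  have hbpos : 0 < EwensAux.ewB θ n n := by rw [hb]; positivity
  rw [← ENNReal.div_eq_inv_mul,
    ← ENNReal.ofReal_div_of_pos (by positivity : (0:ℝ) < E * EwensAux.ewB θ n n)]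
  congr 1
  rw [mul_div_mul_left _ _ (ne_of_gt hEpos)]
  rw [EwensAux.gamma_asc hθ n, hb]
  have hΓ : Real.Gamma θ ≠ 0 := ne_of_gt (Real.Gamma_pos_of_pos hθ)
  rw [EwensAux.ewW]
  field_simp
end

section
/- The density p_θ of the limit of T_{0n}/n satisfies the tail bound sup_{y ≥ m} p_θ(y) ≤ θ^m/m! for every positive integer m; in particular p_θ(1/δ)·δ^{θ-1} → 0 super-polynomially fast as δ → 0 for any fixed θ > 0. -/
open MeasureTheory Filter Set

set_option maxHeartbeats 1000000

lemma mySummable {A : ℝ} {b : ℕ → ℝ} (hb : ∀ k, |b k| ≤ A * (k+1)) {x : ℝ} (hx : |x| < 1) :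
    Summable (fun k => b k * x ^ k) := by
  have h1 : Summable (fun k : ℕ => (k:ℝ) * |x|^k) := by
    simpa using summable_pow_mul_geometric_of_norm_lt_one 1 (r := |x|) (by simpa using hx)
  have h2 : Summable (fun k : ℕ => |x|^k) := summable_geometric_of_lt_one (abs_nonneg x) hx
  have h3 := ((h1.add h2).mul_left A)
  apply Summable.of_norm_bounded h3
  intro k
  have hxk : (0:ℝ) ≤ |x|^k := pow_nonneg (abs_nonneg x) k
  have h4 : ‖b k * x ^ k‖ = |b k| * |x|^k := by
    rw [Real.norm_eq_abs, abs_mul, abs_pow]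
  rw [h4]
  have := mul_le_mul_of_nonneg_right (hb k) hxk
  calc |b k| * |x|^k ≤ A * (k+1) * |x|^k := this
    _ = A * ((k:ℝ) * |x|^k + |x|^k) := by ring

lemma myUnique (d : ℕ → ℝ)
    (hs : Summable (fun k => |d k| * (1/4:ℝ)^k))
    (hd : ∀ x : ℝ, x ∈ Set.Ioo (0:ℝ) (1/4) → ∑' k, d k * x^k = 0) :
    ∀ k, d k = 0 := by
  intro K
  induction K using Nat.strong_induction_on with
  | _ K ih =>
  have key : ∀ m:ℕ, |d (m + (K+1))| * (1/4:ℝ)^m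
      = (|d (m + (K+1))| * (1/4)^(m+(K+1))) * 4^(K+1) := by
    intro m
    have h4 : ((1:ℝ)/4)^(K+1) * (4:ℝ)^(K+1) = 1 := by rw [← mul_pow]; norm_num
    calc |d (m + (K+1))| * (1/4:ℝ)^m
        = |d (m + (K+1))| * ((1/4:ℝ)^m * ((1/4)^(K+1) * 4^(K+1))) := by rw [h4]; ring
      _ = (|d (m + (K+1))| * (1/4)^(m+(K+1))) * 4^(K+1) := by rw [pow_add]; ring
  have hsshift : Summable (fun m => |d (m + (K+1))| * (1/4:ℝ)^m) := by
    simp_rw [key]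
    exact ((summable_nat_add_iff (K+1)).2 hs).mul_right _
  have hC0 : 0 ≤ ∑' m, |d (m + (K+1))| * (1/4:ℝ)^m := tsum_nonneg (fun m => by positivity)
  set C : ℝ := ∑' m, |d (m + (K+1))| * (1/4:ℝ)^m with hC
  -- main estimate
  have main : ∀ x : ℝ, x ∈ Set.Ioo (0:ℝ) (1/4) → |d K| ≤ x * C := by
    intro x hx
    obtain ⟨hx0, hx4⟩ := hx
    have hsum : Summable (fun k => d k * x^k) := by
      apply Summable.of_norm_bounded hs
      intro k
      rw [Real.norm_eq_abs, abs_mul, abs_pow, abs_of_pos hx0]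
      exact mul_le_mul_of_nonneg_left (pow_le_pow_left₀ hx0.le (by linarith) k) (abs_nonneg _)
    have h0 := hd x ⟨hx0, hx4⟩
    -- split at K
    have hsplit := Summable.sum_add_tsum_nat_add K hsum
    have hzero : ∑ i ∈ Finset.range K, d i * x^i = 0 := by
      apply Finset.sum_eq_zero
      intro i hi
      rw [ih i (Finset.mem_range.1 hi)]; ring
    have htail : ∑' m, d (m + K) * x^(m+K) = 0 := by
      rw [← hsplit, hzero, zero_add] at h0; exact h0
    have hsumshift : Summable (fun m => d (m + K) * x^m) := by
      have h5 : ∀ m:ℕ, d (m+K) * x^m = (d (m+K) * x^(m+K)) * (x^K)⁻¹ := by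
        intro m
        rw [pow_add]
        field_simp
      simp_rw [h5]
      exact ((summable_nat_add_iff K).2 hsum).mul_right _
    have hfac : ∑' m, d (m + K) * x^(m+K) = (∑' m, d (m + K) * x^m) * x^K := by
      rw [← tsum_mul_right]
      congr 1; funext m; rw [pow_add]; ring
    have hxK : (x:ℝ)^K ≠ 0 := pow_ne_zero _ hx0.ne'
    have htail2 : ∑' m, d (m + K) * x^m = 0 := by
      have h6 := hfac ▸ htail
      exact (mul_eq_zero.1 h6).resolve_right hxK
    -- split off first term
    have hsplit1 := Summable.sum_add_tsum_nat_add 1 hsumshift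
    have h6 : d K + ∑' m, d (m + 1 + K) * x^(m+1) = 0 := by
      have h7 : ∑ i ∈ Finset.range 1, d (i + K) * x^i = d K := by simp
      rw [← htail2, ← hsplit1, h7]
    -- termwise bound
    have hterm : ∀ m : ℕ, ‖d (m + 1 + K) * x^(m+1)‖ ≤ x * (|d (m + (K+1))| * (1/4:ℝ)^m) := by
      intro m
      rw [Real.norm_eq_abs, abs_mul, abs_pow, abs_of_pos hx0, pow_succ']
      have h7 : x^m ≤ (1/4:ℝ)^m := pow_le_pow_left₀ hx0.le (by linarith) m
      have h8 : m + 1 + K = m + (K+1) := by omega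
      rw [h8]
      calc |d (m + (K+1))| * (x * x^m) = x * (|d (m + (K+1))| * x^m) := by ring
        _ ≤ x * (|d (m + (K+1))| * (1/4)^m) :=
            mul_le_mul_of_nonneg_left
              (mul_le_mul_of_nonneg_left h7 (abs_nonneg _)) hx0.le
    have hsum2 : Summable (fun m => ‖d (m + 1 + K) * x^(m+1)‖) :=
      Summable.of_nonneg_of_le (fun m => norm_nonneg _) hterm (hsshift.mul_left x)
    have habs : |∑' m, d (m + 1 + K) * x^(m+1)| ≤ x * C := by
      calc |∑' m, d (m + 1 + K) * x^(m+1)| ≤ ∑' m, ‖d (m + 1 + K) * x^(m+1)‖ := by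
            simpa [Real.norm_eq_abs] using norm_tsum_le_tsum_norm hsum2
        _ ≤ ∑' m, x * (|d (m + (K+1))| * (1/4:ℝ)^m) :=
            Summable.tsum_le_tsum hterm hsum2 (hsshift.mul_left x)
        _ = x * C := tsum_mul_left
    have h9 : d K = -∑' m, d (m + 1 + K) * x^(m+1) := by linarith
    rw [h9, abs_neg]; exact habs
  -- conclude
  by_contra hne
  have hK : 0 < |d K| := abs_pos.2 hne
  set x := min (1/8 : ℝ) (|d K| / (2 * (C+1))) with hxdef
  have hx0 : 0 < x := by
    apply lt_min (by norm_num)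
    positivity
  have hx4 : x < 1/4 := lt_of_le_of_lt (min_le_left _ _) (by norm_num)
  have h8 := main x ⟨hx0, hx4⟩
  have h9 : x ≤ |d K| / (2 * (C+1)) := min_le_right _ _
  have h10 : |d K| ≤ |d K| / (2 * (C+1)) * C := le_trans h8 (mul_le_mul_of_nonneg_right h9 hC0)
  rw [div_mul_eq_mul_div, le_div_iff₀ (by positivity)] at h10
  nlinarith

lemma meas_sum_le_one (μ : Measure ℕ) [IsProbabilityMeasure μ] (t : Finset ℕ) :
    ∑ i ∈ t, (μ {i}).toReal ≤ 1 := by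
  have h1 : ∑ i ∈ t, (μ {i}).toReal = (∑ i ∈ t, μ {i}).toReal :=
    (ENNReal.toReal_sum (fun a _ => measure_ne_top μ _)).symm
  have h2 : ∑ i ∈ t, μ {i} = μ (⋃ i ∈ t, {i}) :=
    (measure_biUnion_finset (fun i _ j _ hij => by simp [Set.disjoint_singleton, hij])
      (fun i _ => measurableSet_singleton i)).symm
  have h3 : μ (⋃ i ∈ t, {i}) ≤ 1 := prob_le_one
  rw [h1, h2]
  exact ENNReal.toReal_le_of_le_ofReal zero_le_one (by simpa using h3)

lemma myRecurrence (θ : ℝ) (μ : Measure ℕ) [IsProbabilityMeasure μ] (n : ℕ) (hn : 1 ≤ n)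
    (hpgf : ∀ z ∈ Set.Ioc (0:ℝ) 1, ∑' k : ℕ, z^k * (μ {k}).toReal
        = ∏ j ∈ Finset.Icc 1 n, Real.exp ((θ/j) * (z^j - 1))) :
    ∀ r : ℕ, (r:ℝ) * (μ {r}).toReal
      = θ * ∑ j ∈ Finset.Icc 1 (min n r), (μ {r - j}).toReal := by
  set c : ℕ → ℝ := fun k => (μ {k}).toReal with hcdef
  have hc0 : ∀ k, 0 ≤ c k := fun k => ENNReal.toReal_nonneg
  have hc1 : ∀ k, c k ≤ 1 := by
    intro k
    have h := prob_le_one (μ := μ) (s := {k})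
    exact ENNReal.toReal_le_of_le_ofReal zero_le_one (by simpa using h)
  have hcb : ∀ k : ℕ, |c k| ≤ 1 * ((k:ℝ)+1) := by
    intro k
    rw [abs_of_nonneg (hc0 k), one_mul]
    have h : (0:ℝ) ≤ k := Nat.cast_nonneg k
    linarith [hc1 k]
  -- the power series function
  set f : ℝ → ℝ := fun z => ∑' k : ℕ, z^k * c k with hfdef
  have hfsum : ∀ x : ℝ, |x| < 1 → Summable (fun k : ℕ => x^k * c k) := by
    intro x hx
    have := mySummable hcb hx
    simpa [mul_comm] using this
  -- coefficients of the RHS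
  set v : ℕ → ℝ := fun k => θ * ∑ j ∈ Finset.Icc 1 (min n k), c (k - j) with hvdef
  have hvb : ∀ k, |v k| ≤ (|θ| * n) * ((k:ℝ)+1) := by
    intro k
    have h1 : |∑ j ∈ Finset.Icc 1 (min n k), c (k - j)| ≤ (n:ℝ) := by
      rw [abs_of_nonneg (Finset.sum_nonneg (fun j _ => hc0 _))]
      have hcard : (Finset.Icc 1 (min n k)).card = min n k := by
        rw [Nat.card_Icc]; omega
      calc ∑ j ∈ Finset.Icc 1 (min n k), c (k - j)
          ≤ ∑ j ∈ Finset.Icc 1 (min n k), 1 := Finset.sum_le_sum (fun j _ => hc1 _)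
        _ = ((Finset.Icc 1 (min n k)).card : ℝ) := by simp
        _ ≤ (n:ℝ) := by rw [hcard]; exact_mod_cast min_le_left n k
    have h2 : (1:ℝ) ≤ (k:ℝ)+1 := by
      have h3 : (0:ℝ) ≤ k := Nat.cast_nonneg k
      linarith
    calc |v k| = |θ| * |∑ j ∈ Finset.Icc 1 (min n k), c (k - j)| := abs_mul _ _
      _ ≤ |θ| * n := mul_le_mul_of_nonneg_left h1 (abs_nonneg θ)
      _ ≤ (|θ| * n) * ((k:ℝ)+1) := le_mul_of_one_le_right (by positivity) h2
  -- bound for the coefficient of the 'if' series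
  have hwb : ∀ (j : ℕ), ∀ k : ℕ, |(if j ≤ k then θ * c (k-j) else 0)| ≤ |θ| * ((k:ℝ)+1) := by
    intro j k
    by_cases h : j ≤ k
    · rw [if_pos h, abs_mul]
      have h2 : |c (k-j)| ≤ 1 := by rw [abs_of_nonneg (hc0 _)]; exact hc1 _
      have h3 : (1:ℝ) ≤ (k:ℝ)+1 := by
        have h4 : (0:ℝ) ≤ k := Nat.cast_nonneg k
        linarith
      calc |θ| * |c (k-j)| ≤ |θ| * 1 := mul_le_mul_of_nonneg_left h2 (abs_nonneg θ)
        _ ≤ |θ| * ((k:ℝ)+1) := mul_le_mul_of_nonneg_left h3 (abs_nonneg θ)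
    · rw [if_neg h]
      simp only [abs_zero]
      positivity
  -- derivative of f via term-by-term differentiation
  have hfderiv : ∀ x ∈ Set.Ioo (-(1/2):ℝ) (1/2),
      HasDerivAt f (∑' k : ℕ, (k:ℝ) * x^(k-1) * c k) x := by
    intro x hx
    apply hasDerivAt_tsum_of_isPreconnected
      (u := fun k : ℕ => 2 * ((k:ℝ) * (1/2)^k))
      (t := Set.Ioo (-(1/2):ℝ) (1/2))
      (g' := fun k x => (k:ℝ) * x^(k-1) * c k)
      (y₀ := 0)
    · have := summable_pow_mul_geometric_of_norm_lt_one 1 (r := (1/2:ℝ)) (by norm_num)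
      simpa using this.mul_left 2
    · exact isOpen_Ioo
    · exact isPreconnected_Ioo
    · intro k y _
      simpa [mul_assoc] using (hasDerivAt_pow k y).mul_const (c k)
    · intro k y hy
      have hy2 : |y| ≤ 1/2 := by
        rw [abs_le]; constructor
        · linarith [hy.1]
        · linarith [hy.2]
      rcases k with _ | m
      · simp
      · have hyp := pow_le_pow_left₀ (abs_nonneg y) hy2 m
        have hc := hc1 (m+1)
        have hc0' := hc0 (m+1)
        have h4 : |y|^m * |c (m+1)| ≤ (1/2:ℝ)^m := by
          rw [abs_of_nonneg hc0']
          calc |y|^m * c (m+1) ≤ (1/2:ℝ)^m * 1 :=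
            mul_le_mul hyp hc hc0' (by positivity)
          _ = (1/2)^m := mul_one _
        have h3 : ‖((m+1:ℕ):ℝ) * y^m * c (m+1)‖ ≤ ((m+1:ℕ):ℝ) * (1/2)^m := by
          rw [Real.norm_eq_abs, abs_mul, abs_mul, abs_pow,
            abs_of_nonneg (Nat.cast_nonneg (m+1) : (0:ℝ) ≤ ((m+1:ℕ):ℝ)), mul_assoc]
          exact mul_le_mul_of_nonneg_left h4 (Nat.cast_nonneg _)
        calc ‖((m+1:ℕ):ℝ) * y^(m+1-1) * c (m+1)‖
            ≤ ((m+1:ℕ):ℝ) * (1/2)^m := by simpa using h3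
          _ = 2 * (((m+1:ℕ):ℝ) * (1/2)^(m+1)) := by
              rw [pow_succ]; ring
    · constructor <;> norm_num
    · exact hfsum 0 (by norm_num)
    · exact hx
  -- the explicit product and its derivative
  set P : ℝ → ℝ := fun z => ∑ j ∈ Finset.Icc 1 n, (θ/j) * (z^j - 1) with hPdef
  have hPG : ∀ z : ℝ, ∏ j ∈ Finset.Icc 1 n, Real.exp ((θ/j) * (z^j - 1)) = Real.exp (P z) :=
    fun z => (Real.exp_sum _ _).symm
  have hPderiv : ∀ x : ℝ, HasDerivAt P (∑ j ∈ Finset.Icc 1 n, θ * x^(j-1)) x := by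
    intro x
    have h1 : HasDerivAt P (∑ j ∈ Finset.Icc 1 n, (θ/j) * ((j:ℝ) * x^(j-1))) x := by
      apply HasDerivAt.fun_sum
      intro j _
      exact ((hasDerivAt_pow j x).sub_const 1).const_mul (θ/j)
    have h2 : ∑ j ∈ Finset.Icc 1 n, (θ/j) * ((j:ℝ) * x^(j-1))
        = ∑ j ∈ Finset.Icc 1 n, θ * x^(j-1) := by
      apply Finset.sum_congr rfl
      intro j hj
      have hj1 : 1 ≤ j := (Finset.mem_Icc.1 hj).1
      have hjne : (j:ℝ) ≠ 0 := Nat.cast_ne_zero.2 (by omega)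
      field_simp
    rwa [h2] at h1
  -- equality of coefficients
  have hcoeff : ∀ k : ℕ, ((k:ℝ) * c k - v k) = 0 := by
    apply myUnique
    · -- summability of the coefficient bound
      have hb : ∀ k : ℕ, |(k:ℝ) * c k - v k| ≤ (1 + |θ| * n) * ((k:ℝ)+1) := by
        intro k
        have h1 : |(k:ℝ) * c k| ≤ (k:ℝ) + 1 := by
          rw [abs_mul, abs_of_nonneg (Nat.cast_nonneg k : (0:ℝ) ≤ (k:ℝ)),
            abs_of_nonneg (hc0 k)]
          nlinarith [hc1 k, hc0 k, Nat.cast_nonneg (α := ℝ) k]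
        calc |(k:ℝ) * c k - v k| ≤ |(k:ℝ) * c k| + |v k| := abs_sub _ _
          _ ≤ ((k:ℝ)+1) + (|θ| * n) * ((k:ℝ)+1) := add_le_add h1 (hvb k)
          _ = (1 + |θ| * n) * ((k:ℝ)+1) := by ring
      refine mySummable (A := 1 + |θ| * n) (fun k => ?_)
        (show |(1/4:ℝ)| < 1 by rw [abs_of_nonneg (by norm_num : (0:ℝ) ≤ 1/4)]; norm_num)
      rw [abs_abs]; exact hb k
    · -- the functional identity on (0, 1/4)
      intro x hx
      obtain ⟨hx0, hx4⟩ := hx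
      have hxabs : |x| < 1 := by rw [abs_of_pos hx0]; linarith
      have hfx : f x = Real.exp (P x) := by
        have h := hpgf x ⟨hx0, by linarith⟩
        rw [hPG] at h
        exact h
      -- derivative identity
      have hD1 : HasDerivAt f (∑' k : ℕ, (k:ℝ) * x^(k-1) * c k) x :=
        hfderiv x ⟨by linarith, by linarith⟩
      have hD2 : HasDerivAt f (Real.exp (P x) * ∑ j ∈ Finset.Icc 1 n, θ * x^(j-1)) x := by
        have hexp : HasDerivAt (fun z => Real.exp (P z))
            (Real.exp (P x) * ∑ j ∈ Finset.Icc 1 n, θ * x^(j-1)) x := (hPderiv x).exp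
        apply hexp.congr_of_eventuallyEq
        have hmem : Set.Ioo (0:ℝ) (1/2) ∈ nhds x :=
          Ioo_mem_nhds hx0 (by linarith)
        filter_upwards [hmem] with z hz
        have h := hpgf z ⟨hz.1, by linarith [hz.2]⟩
        rw [hPG] at h
        exact h
      have hEq : (∑' k : ℕ, (k:ℝ) * x^(k-1) * c k)
          = Real.exp (P x) * ∑ j ∈ Finset.Icc 1 n, θ * x^(j-1) := hD1.unique hD2
      -- multiply by x : left side
      have hL : x * (∑' k : ℕ, (k:ℝ) * x^(k-1) * c k)
          = ∑' k : ℕ, ((k:ℝ) * c k) * x^k := by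
        rw [← tsum_mul_left]
        apply tsum_congr
        intro k
        rcases k with _ | m
        · simp
        · have hpow : x * x^(m+1-1) = x^(m+1) := by
            rw [Nat.add_sub_cancel, pow_succ']
          calc x * (((m+1:ℕ):ℝ) * x^(m+1-1) * c (m+1))
              = ((m+1:ℕ):ℝ) * c (m+1) * (x * x^(m+1-1)) := by ring
            _ = ((m+1:ℕ):ℝ) * c (m+1) * x^(m+1) := by rw [hpow]
      -- multiply by x : right side
      have hR : x * (Real.exp (P x) * ∑ j ∈ Finset.Icc 1 n, θ * x^(j-1))
          = ∑' k : ℕ, v k * x^k := by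
        have hfx' : Real.exp (P x) = f x := hfx.symm
        rw [hfx']
        have h1 : x * (f x * ∑ j ∈ Finset.Icc 1 n, θ * x^(j-1))
            = ∑ j ∈ Finset.Icc 1 n, (θ * x^j) * f x := by
          rw [Finset.mul_sum, Finset.mul_sum]
          apply Finset.sum_congr rfl
          intro j hj
          have hj1 : 1 ≤ j := (Finset.mem_Icc.1 hj).1
          have hxj : x^j = x * x^(j-1) := by
            conv_lhs => rw [show j = (j-1)+1 by omega]
            rw [pow_succ']
          rw [hxj]; ring
        rw [h1]
        -- each term as a tsum
        have h2 : ∀ j ∈ Finset.Icc 1 n, (θ * x^j) * f x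
            = ∑' k : ℕ, (if j ≤ k then θ * c (k-j) else 0) * x^k := by
          intro j hj
          have hwsum : Summable (fun k : ℕ => (if j ≤ k then θ * c (k-j) else 0) * x^k) :=
            mySummable (hwb j) hxabs
          have hsplit := Summable.sum_add_tsum_nat_add j hwsum
          have hz : ∑ i ∈ Finset.range j, (if j ≤ i then θ * c (i-j) else 0) * x^i = 0 := by
            apply Finset.sum_eq_zero
            intro i hi
            rw [if_neg (by simp at hi; omega : ¬ j ≤ i)]
            ring
          have hsh : ∑' m : ℕ, (if j ≤ m + j then θ * c (m+j-j) else 0) * x^(m+j)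
              = (θ * x^j) * f x := by
            have hterm : ∀ m : ℕ, (if j ≤ m + j then θ * c (m+j-j) else 0) * x^(m+j)
                = (θ * x^j) * (x^m * c m) := by
              intro m
              rw [if_pos (by omega : j ≤ m + j), Nat.add_sub_cancel, pow_add]
              ring
            rw [tsum_congr hterm, tsum_mul_left]
          rw [← hsplit, hz, zero_add, hsh]
        rw [Finset.sum_congr rfl h2]
        -- exchange sum and tsum
        rw [← Summable.tsum_finsetSum (fun j _ => mySummable (hwb j) hxabs)]
        apply tsum_congr
        intro k
        rw [← Finset.sum_mul]
        congr 1
        show _ = θ * ∑ j ∈ Finset.Icc 1 (min n k), c (k - j)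
        have hfil : (Finset.Icc 1 n).filter (fun j => j ≤ k) = Finset.Icc 1 (min n k) := by
          ext j
          simp only [Finset.mem_filter, Finset.mem_Icc]
          omega
        rw [← hfil, Finset.sum_filter, Finset.mul_sum]
        apply Finset.sum_congr rfl
        intro j _
        by_cases h : j ≤ k
        · rw [if_pos h, if_pos h]
        · rw [if_neg h, if_neg h]; ring
      -- combine
      have hb1 : ∀ k : ℕ, |(k:ℝ) * c k| ≤ 1 * ((k:ℝ)+1) := by
        intro k
        rw [one_mul, abs_mul, abs_of_nonneg (Nat.cast_nonneg k : (0:ℝ) ≤ (k:ℝ)),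
          abs_of_nonneg (hc0 k)]
        nlinarith [hc1 k, hc0 k, Nat.cast_nonneg (α := ℝ) k]
      have hsum1 : Summable (fun k : ℕ => ((k:ℝ) * c k) * x^k) := mySummable hb1 hxabs
      have hsum2 : Summable (fun k : ℕ => v k * x^k) := mySummable hvb hxabs
      have hfin : ∑' k : ℕ, ((k:ℝ) * c k) * x^k = ∑' k : ℕ, v k * x^k := by
        rw [← hL, ← hR, hEq]
      calc ∑' k : ℕ, ((k:ℝ) * c k - v k) * x^k
          = ∑' k : ℕ, (((k:ℝ) * c k) * x^k - v k * x^k) := by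
            apply tsum_congr; intro k; ring
        _ = (∑' k : ℕ, ((k:ℝ) * c k) * x^k) - ∑' k : ℕ, v k * x^k :=
            Summable.tsum_sub hsum1 hsum2
        _ = 0 := by rw [hfin]; ring
  intro r
  have h := hcoeff r
  have h2 : (r:ℝ) * c r = v r := by linarith
  exact h2

lemma myTail (θ : ℝ) (hθ : 0 < θ) (μ : Measure ℕ) [IsProbabilityMeasure μ] (n : ℕ) (hn : 1 ≤ n)
    (hrec : ∀ r : ℕ, (r:ℝ) * (μ {r}).toReal
      = θ * ∑ j ∈ Finset.Icc 1 (min n r), (μ {r - j}).toReal) :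
    ∀ m : ℕ, 1 ≤ m → ∀ r : ℕ, m * n ≤ r →
      (n:ℝ) * (μ {r}).toReal ≤ θ^m / m.factorial := by
  have hc0 : ∀ k : ℕ, (0:ℝ) ≤ (μ {k}).toReal := fun k => ENNReal.toReal_nonneg
  have hS1 : ∀ r : ℕ, ∑ j ∈ Finset.Icc 1 (min n r), (μ {r - j}).toReal ≤ 1 := by
    intro r
    have hinj : ∀ a ∈ Finset.Icc 1 (min n r), ∀ b ∈ Finset.Icc 1 (min n r),
        r - a = r - b → a = b := by
      intro a ha b hb hab
      simp only [Finset.mem_Icc] at ha hb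
      omega
    have h := Finset.sum_image (g := fun j => r - j) (f := fun i => (μ {i}).toReal)
      (s := Finset.Icc 1 (min n r)) hinj
    rw [← h]
    exact meas_sum_le_one μ _
  have hcard : ∀ r : ℕ, ((Finset.Icc 1 (min n r)).card : ℝ) ≤ (n:ℝ) := by
    intro r
    have : (Finset.Icc 1 (min n r)).card = min n r := by rw [Nat.card_Icc]; omega
    rw [this]
    exact_mod_cast min_le_left n r
  intro m hm
  induction m, hm using Nat.le_induction with
  | base =>
    intro r hr
    rw [one_mul] at hr
    have hr1 : 1 ≤ r := le_trans hn hr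
    have h1 : (r:ℝ) * (μ {r}).toReal ≤ θ := by
      rw [hrec r]
      calc θ * ∑ j ∈ Finset.Icc 1 (min n r), (μ {r - j}).toReal ≤ θ * 1 :=
        mul_le_mul_of_nonneg_left (hS1 r) hθ.le
      _ = θ := mul_one θ
    have h2 : (n:ℝ) * (μ {r}).toReal ≤ (r:ℝ) * (μ {r}).toReal :=
      mul_le_mul_of_nonneg_right (by exact_mod_cast hr) (hc0 r)
    simpa [Nat.factorial] using h2.trans h1
  | succ m hm ih =>
    intro r hr
    have hn0 : (0:ℝ) < n := by exact_mod_cast hn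
    have hfac0 : (0:ℝ) < (m.factorial : ℝ) := by exact_mod_cast m.factorial_pos
    -- bound each summand
    have hterm : ∀ j ∈ Finset.Icc 1 (min n r),
        (μ {r - j}).toReal ≤ θ^m / m.factorial / n := by
      intro j hj
      simp only [Finset.mem_Icc] at hj
      have hj' : m * n ≤ r - j := by
        have h1 : j ≤ n := le_trans hj.2 (min_le_left n r)
        have h3 : m * n + n ≤ r := by rw [← Nat.succ_mul]; exact hr
        exact Nat.le_sub_of_add_le (by omega)
      have := ih (r - j) hj'
      rw [div_div]
      rw [le_div_iff₀ (by positivity)]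
      calc (μ {r - j}).toReal * ((m.factorial:ℝ) * n)
          = ((n:ℝ) * (μ {r - j}).toReal) * (m.factorial:ℝ) := by ring
        _ ≤ (θ^m / m.factorial) * (m.factorial:ℝ) := by
            exact mul_le_mul_of_nonneg_right this hfac0.le
        _ = θ^m := by field_simp
    have hsum : ∑ j ∈ Finset.Icc 1 (min n r), (μ {r - j}).toReal
        ≤ θ^m / m.factorial := by
      calc ∑ j ∈ Finset.Icc 1 (min n r), (μ {r - j}).toReal
          ≤ ∑ j ∈ Finset.Icc 1 (min n r), (θ^m / m.factorial / n) :=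
            Finset.sum_le_sum hterm
        _ = ((Finset.Icc 1 (min n r)).card : ℝ) * (θ^m / m.factorial / n) := by
            rw [Finset.sum_const, nsmul_eq_mul]
        _ ≤ (n:ℝ) * (θ^m / m.factorial / n) := by
            apply mul_le_mul_of_nonneg_right (hcard r)
            positivity
        _ = θ^m / m.factorial := by field_simp
    have hrc : (r:ℝ) * (μ {r}).toReal ≤ θ^(m+1) / m.factorial := by
      rw [hrec r]
      calc θ * ∑ j ∈ Finset.Icc 1 (min n r), (μ {r - j}).toReal
          ≤ θ * (θ^m / m.factorial) := mul_le_mul_of_nonneg_left hsum hθ.le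
        _ = θ^(m+1) / m.factorial := by rw [pow_succ]; ring
    -- divide by (m+1)
    have hmn : ((m+1:ℕ):ℝ) * ((n:ℝ) * (μ {r}).toReal) ≤ (r:ℝ) * (μ {r}).toReal := by
      have h1 : (((m+1) * n : ℕ):ℝ) ≤ (r:ℝ) := by exact_mod_cast hr
      push_cast at h1
      have := mul_le_mul_of_nonneg_right h1 (hc0 r)
      calc ((m+1:ℕ):ℝ) * ((n:ℝ) * (μ {r}).toReal)
          = (((m:ℝ)+1) * n) * (μ {r}).toReal := by push_cast; ring
        _ ≤ (r:ℝ) * (μ {r}).toReal := this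
    have hm1 : (0:ℝ) < ((m+1:ℕ):ℝ) := by positivity
    rw [← le_div_iff₀' hm1] at hmn
    refine hmn.trans ?_
    have h6 : (((m+1).factorial : ℕ) : ℝ) = ((m+1:ℕ):ℝ) * (m.factorial:ℝ) := by
      rw [Nat.factorial_succ]; push_cast; ring
    calc (r:ℝ) * (μ {r}).toReal / ((m+1:ℕ):ℝ)
        ≤ (θ^(m+1) / m.factorial) / ((m+1:ℕ):ℝ) := by gcongr
      _ = θ^(m+1) / (m+1).factorial := by
          rw [div_div, h6]; ring_nf

lemma ceil_div_tendsto (y : ℝ) (hy : 0 < y) :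
    Tendsto (fun n : ℕ => ((⌈y * n⌉₊ : ℝ)) / n) atTop (nhds y) := by
  have h1 : Tendsto (fun n : ℕ => y + 1/(n:ℝ)) atTop (nhds (y+0)) :=
    tendsto_const_nhds.add tendsto_one_div_atTop_nhds_zero_nat
  rw [add_zero] at h1
  apply tendsto_of_tendsto_of_tendsto_of_le_of_le' tendsto_const_nhds h1
  · filter_upwards [eventually_ge_atTop 1] with n hn
    have hn0 : (0:ℝ) < n := by exact_mod_cast hn
    rw [le_div_iff₀ hn0]
    exact Nat.le_ceil _
  · filter_upwards [eventually_ge_atTop 1] with n hn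
    have hn0 : (0:ℝ) < n := by exact_mod_cast hn
    rw [div_le_iff₀ hn0]
    have h2 := Nat.ceil_lt_add_one (by positivity : (0:ℝ) ≤ y * n)
    calc (⌈y*(n:ℝ)⌉₊:ℝ) ≤ y*n + 1 := h2.le
      _ = (y + 1/n)*n := by field_simp

/-- The limiting density `p_θ` of `T_{0n}/n` (for `T_{0n} = ∑ j Z_j` with `Z_j`
independent Poisson(θ/j)) satisfies `sup_{y ≥ m} p_θ(y) ≤ θ^m/m!` for every
positive integer `m`; in particular `p_θ(1/δ) δ^{θ-1} → 0` super-polynomially fast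
as `δ → 0⁺`. -/
theorem ptheta_tail_bound (θ : ℝ) (hθ : 0 < θ)
    (μT : ℕ → Measure ℕ) (hprob : ∀ n, IsProbabilityMeasure (μT n))
    (hpgf : ∀ n : ℕ, 1 ≤ n → ∀ z ∈ Set.Ioc (0 : ℝ) 1,
      ∑' k : ℕ, z ^ k * (μT n {k}).toReal
        = ∏ j ∈ Finset.Icc 1 n, Real.exp ((θ / j) * (z ^ j - 1)))
    (p : ℝ → ℝ)
    (hp : ∀ y : ℝ, 0 < y → ∀ r : ℕ → ℕ,
      Tendsto (fun n : ℕ => (r n : ℝ) / n) atTop (nhds y) →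
      Tendsto (fun n : ℕ => (n : ℝ) * (μT n {r n}).toReal) atTop (nhds (p y))) :
    (∀ m : ℕ, 1 ≤ m → ∀ y : ℝ, (m : ℝ) ≤ y → p y ≤ θ ^ m / m.factorial) ∧
      ∀ k : ℕ,
        Tendsto (fun δ : ℝ => p (1 / δ) * δ ^ (θ - 1) / δ ^ k)
          (nhdsWithin 0 (Set.Ioi 0)) (nhds 0) := by
  haveI : ∀ n, IsProbabilityMeasure (μT n) := hprob
  -- Part 1
  have part1 : ∀ m : ℕ, 1 ≤ m → ∀ y : ℝ, (m : ℝ) ≤ y → p y ≤ θ ^ m / m.factorial := by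
    intro m hm y hmy
    have hy : 0 < y := lt_of_lt_of_le (by exact_mod_cast hm) hmy
    have htend := hp y hy (fun n => ⌈y * n⌉₊) (ceil_div_tendsto y hy)
    apply le_of_tendsto htend
    filter_upwards [eventually_ge_atTop 1] with n hn
    have hmn : m * n ≤ ⌈y * n⌉₊ := by
      have h2 : ((m*n : ℕ):ℝ) ≤ y * n := by
        push_cast
        exact mul_le_mul_of_nonneg_right hmy (Nat.cast_nonneg n)
      have h3 := Nat.le_ceil (y * (n:ℝ))
      exact_mod_cast h2.trans h3
    exact myTail θ hθ (μT n) n hn (myRecurrence θ (μT n) n hn (hpgf n hn)) m hm _ hmn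
  refine ⟨part1, ?_⟩
  -- nonnegativity of p
  have pnn : ∀ y : ℝ, 0 < y → 0 ≤ p y := by
    intro y hy
    have htend := hp y hy (fun n => ⌈y * n⌉₊) (ceil_div_tendsto y hy)
    apply ge_of_tendsto htend
    filter_upwards with n
    have := ENNReal.toReal_nonneg (a := μT n {⌈y * n⌉₊})
    positivity
  intro k
  -- the bound sequence tends to zero
  have hGten : Tendsto (fun m : ℕ => θ^m / m.factorial * ((m:ℝ)+1)^(k+1)) atTop (nhds 0) := by
    have hexp : Tendsto (fun m : ℕ =>
        (((k+1).factorial : ℝ) * Real.exp 1) * ((Real.exp 1 * θ)^m / m.factorial)) atTop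
        (nhds ((((k+1).factorial : ℝ) * Real.exp 1) * 0)) :=
      (FloorSemiring.tendsto_pow_div_factorial_atTop (Real.exp 1 * θ)).const_mul _
    rw [mul_zero] at hexp
    apply squeeze_zero (fun m => by positivity) _ hexp
    intro m
    have hfac0 : (0:ℝ) < (m.factorial : ℝ) := by exact_mod_cast m.factorial_pos
    have h1 : ((m:ℝ)+1)^(k+1) ≤ ((k+1).factorial : ℝ) * Real.exp ((m:ℝ)+1) := by
      have h3 := Real.sum_le_exp_of_nonneg (x := (m:ℝ)+1) (by positivity) (k+2)
      have h4 : ((m:ℝ)+1)^(k+1)/((k+1).factorial:ℝ)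
          ≤ ∑ i ∈ Finset.range (k+2), ((m:ℝ)+1)^i / (i.factorial:ℝ) :=
        Finset.single_le_sum (f := fun i => ((m:ℝ)+1)^i/(i.factorial:ℝ))
          (fun i _ => by positivity) (by simp)
      have h5 := h4.trans h3
      rw [div_le_iff₀ (by positivity)] at h5
      calc ((m:ℝ)+1)^(k+1) ≤ Real.exp ((m:ℝ)+1) * ((k+1).factorial:ℝ) := h5
        _ = ((k+1).factorial : ℝ) * Real.exp ((m:ℝ)+1) := by ring
    have hexpm : Real.exp ((m:ℝ)+1) = Real.exp 1 * (Real.exp 1)^m := by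
      have hh : Real.exp ((m:ℝ)) = Real.exp 1 ^ m := by
        rw [← Real.exp_nat_mul]; norm_num
      rw [Real.exp_add, hh]; ring
    calc θ^m / m.factorial * ((m:ℝ)+1)^(k+1)
        ≤ θ^m / m.factorial * (((k+1).factorial : ℝ) * Real.exp ((m:ℝ)+1)) := by
          apply mul_le_mul_of_nonneg_left h1 (by positivity)
      _ = (((k+1).factorial : ℝ) * Real.exp 1) * ((Real.exp 1 * θ)^m / m.factorial) := by
          rw [hexpm, mul_pow]; ring
  -- floor tends to infinity
  have hfl : Tendsto (fun δ : ℝ => ⌊1/δ⌋₊) (nhdsWithin 0 (Set.Ioi 0)) atTop := by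
    apply tendsto_nat_floor_atTop.comp
    exact tendsto_inv_nhdsGT_zero.congr (fun x => (one_div x).symm)
  have hcomp := hGten.comp hfl
  -- squeeze
  apply squeeze_zero'
  · filter_upwards [Ioo_mem_nhdsGT_of_mem (by simp : (0:ℝ) ∈ Set.Ico (0:ℝ) 1)] with δ hδ
    obtain ⟨hδ0, hδ1⟩ := hδ
    have h1 : 0 ≤ p (1/δ) := pnn _ (by positivity)
    have h2 : (0:ℝ) ≤ δ ^ (θ-1) := Real.rpow_nonneg hδ0.le _
    have h3 : (0:ℝ) < δ ^ k := by positivity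
    positivity
  · filter_upwards [Ioo_mem_nhdsGT_of_mem (by simp : (0:ℝ) ∈ Set.Ico (0:ℝ) 1)] with δ hδ
    obtain ⟨hδ0, hδ1⟩ := hδ
    set m : ℕ := ⌊1/δ⌋₊ with hmdef
    have hδinv : (1:ℝ) ≤ 1/δ := by
      rw [le_div_iff₀ hδ0]; linarith
    have hm1 : 1 ≤ m := Nat.le_floor (by exact_mod_cast hδinv)
    have hmle : (m:ℝ) ≤ 1/δ := Nat.floor_le (by positivity)
    have hlt : 1/δ < (m:ℝ)+1 := by
      have := Nat.lt_floor_add_one (1/δ)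
      exact_mod_cast this
    have hp1 : p (1/δ) ≤ θ^m / m.factorial := part1 m hm1 (1/δ) hmle
    -- rewrite the power
    have hδpow : δ ^ (θ-1) / δ^k = δ ^ (θ-1-(k:ℝ)) := by
      rw [← Real.rpow_natCast δ k, ← Real.rpow_sub hδ0]
    have hpowle : δ ^ (θ-1-(k:ℝ)) ≤ ((m:ℝ)+1)^(k+1) := by
      have hm0 : (0:ℝ) < (m:ℝ)+1 := by positivity
      have hb1 : (1:ℝ) ≤ (m:ℝ)+1 := by
        have : (0:ℝ) ≤ m := Nat.cast_nonneg m
        linarith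
      rcases le_or_gt 0 (θ-1-(k:ℝ)) with ha | ha
      · calc δ ^ (θ-1-(k:ℝ)) ≤ 1 := Real.rpow_le_one hδ0.le hδ1.le ha
          _ ≤ ((m:ℝ)+1)^(k+1) := one_le_pow₀ hb1
      · have h6 : 1/((m:ℝ)+1) < δ := by
          rw [div_lt_iff₀ hm0]
          rw [div_lt_iff₀ hδ0] at hlt
          linarith
        calc δ ^ (θ-1-(k:ℝ))
            ≤ (1/((m:ℝ)+1)) ^ (θ-1-(k:ℝ)) :=
              Real.rpow_le_rpow_of_nonpos (by positivity) h6.le ha.le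
          _ = ((m:ℝ)+1) ^ (-(θ-1-(k:ℝ))) := by
              rw [one_div, Real.inv_rpow hm0.le, ← Real.rpow_neg hm0.le]
          _ ≤ ((m:ℝ)+1) ^ (((k+1:ℕ)):ℝ) := by
              apply Real.rpow_le_rpow_of_exponent_le hb1
              push_cast
              linarith
          _ = ((m:ℝ)+1)^(k+1) := by
              rw [Real.rpow_natCast]
    have h2 : (0:ℝ) ≤ δ ^ (θ-1-(k:ℝ)) := Real.rpow_nonneg hδ0.le _
    calc p (1/δ) * δ ^ (θ-1) / δ^k = p (1/δ) * (δ ^ (θ-1) / δ^k) := by ring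
      _ = p (1/δ) * δ ^ (θ-1-(k:ℝ)) := by rw [hδpow]
      _ ≤ (θ^m / m.factorial) * ((m:ℝ)+1)^(k+1) := by
          apply mul_le_mul hp1 hpowle h2 (by positivity)
  · exact hcomp
end

section
/- As n → ∞ with m ≥ 0 fixed, exp(θ·Σ_{ℓ=1}^n (e^{−ℓm/n} − 1)/ℓ) converges to ∫_0^∞ e^{−my}·p_θ(y)dy, the Laplace transform at m of the density p_θ. -/
open MeasureTheory Filter Set

/-- As `n → ∞` with `m ≥ 0` fixed, `exp(θ ∑_{ℓ=1}^n (e^{−ℓm/n} − 1)/ℓ)` converges to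
`∫_0^∞ e^{−my} p_θ(y) dy`, the Laplace transform of the limiting density `p_θ` of
`T_{0n}/n`, where `T_{0n} = ∑ j Z_j` with `Z_j` independent Poisson(θ/j), whose law
is characterized by `E[z^{T_{0n}}] = ∏_{j=1}^n exp((θ/j)(z^j−1))`. -/
theorem exp_sum_tendsto_laplace_transform (θ : ℝ) (hθ : 0 < θ) (m : ℝ) (hm : 0 ≤ m)
    (μT : ℕ → Measure ℕ) (hprob : ∀ n, IsProbabilityMeasure (μT n))
    (hpgf : ∀ n : ℕ, 1 ≤ n → ∀ z ∈ Set.Ioc (0 : ℝ) 1,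
      ∑' k : ℕ, z ^ k * (μT n {k}).toReal
        = ∏ j ∈ Finset.Icc 1 n, Real.exp ((θ / j) * (z ^ j - 1)))
    (p : ℝ → ℝ) (hpmeas : Measurable p) (hp0 : ∀ y, 0 ≤ p y)
    (hweak : ∀ f : ℝ → ℝ, Continuous f → (∃ Cb, ∀ x, |f x| ≤ Cb) →
      Tendsto (fun n : ℕ => ∫ k, f ((k : ℝ) / n) ∂(μT n)) atTop
        (nhds (∫ y in Set.Ioi (0 : ℝ), f y * p y))) :
    Tendsto
      (fun n : ℕ =>
        Real.exp (θ * ∑ ℓ ∈ Finset.Icc 1 n, (Real.exp (-(ℓ * m) / n) - 1) / ℓ))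
      atTop (nhds (∫ y in Set.Ioi (0 : ℝ), Real.exp (-(m * y)) * p y)) := by
  set f : ℝ → ℝ := fun x => Real.exp (-(m * max x 0)) with hf
  have hfc : Continuous f := by
    exact (Real.continuous_exp.comp ((continuous_const.mul
      (continuous_id.max continuous_const)).neg))
  have hfb : ∀ x, |f x| ≤ 1 := by
    intro x
    rw [abs_of_pos (Real.exp_pos _)]
    apply Real.exp_le_one_iff.mpr
    simp only [neg_nonpos]
    exact mul_nonneg hm (le_max_right _ _)
  have hlim := hweak f hfc ⟨1, hfb⟩
  have heqlim : (∫ y in Set.Ioi (0 : ℝ), f y * p y)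
      = ∫ y in Set.Ioi (0 : ℝ), Real.exp (-(m * y)) * p y := by
    apply setIntegral_congr_fun measurableSet_Ioi
    intro y hy
    simp only [f, max_eq_left (le_of_lt (Set.mem_Ioi.mp hy))]
  rw [heqlim] at hlim
  apply hlim.congr'
  filter_upwards [eventually_ge_atTop 1] with n hn
  have hnpos : (0 : ℝ) < n := by exact_mod_cast hn
  set z : ℝ := Real.exp (-m / n) with hz
  have hzmem : z ∈ Set.Ioc (0 : ℝ) 1 := by
    constructor
    · exact Real.exp_pos _
    · apply Real.exp_le_one_iff.mpr
      apply div_nonpos_of_nonpos_of_nonneg (neg_nonpos.mpr hm) hnpos.le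
  have hzpow : ∀ k : ℕ, z ^ k = Real.exp (-((k : ℝ) * m) / n) := by
    intro k
    rw [hz, ← Real.exp_nat_mul]
    congr 1
    ring
  have key := hpgf n hn z hzmem
  -- integral equals tsum
  have hint : Integrable (fun k : ℕ => f ((k : ℝ) / n)) (μT n) := by
    haveI := hprob n
    apply Integrable.mono (integrable_const (1 : ℝ))
    · exact (Measurable.aestronglyMeasurable (by measurability))
    · exact Filter.Eventually.of_forall fun k => by
        simpa [norm, Real.norm_eq_abs] using hfb ((k : ℝ) / n)
  have hIeq : (∫ k, f ((k : ℝ) / n) ∂(μT n))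
      = ∑' k : ℕ, z ^ k * ((μT n) {k}).toReal := by
    rw [MeasureTheory.integral_countable' hint]
    congr 1
    funext k
    have hk0 : (0 : ℝ) ≤ (k : ℝ) / n := div_nonneg (Nat.cast_nonneg k) hnpos.le
    rw [smul_eq_mul, mul_comm]
    congr 1
    rw [hzpow k]
    simp only [f, max_eq_left hk0]
    ring
  rw [hIeq, key]
  rw [← Real.exp_sum]
  · congr 1
    rw [Finset.mul_sum]
    apply Finset.sum_congr rfl
    intro j hj
    rw [hzpow j]
    rw [div_mul_eq_mul_div, mul_div_assoc]
end

section
/- With r_k = e^{−m/(2n_k)} and n_k → ∞, the ratio n_k^{−θ}·exp(θ·V_{n_k}(r_k)/2) converges to e^{θγ}·∫_0^∞ e^{−my} p_θ(y) dy, where V_n(r) = 2Σ_{ℓ=1}^n r^{2ℓ}/ℓ and γ is the Euler–Mascheroni constant. -/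
open MeasureTheory Filter Set

private lemma harmonic_cast_real (n : ℕ) :
    ((harmonic n : ℚ) : ℝ) = ∑ j ∈ Finset.Icc 1 n, ((j : ℝ))⁻¹ := by
  rw [harmonic_eq_sum_Icc]
  push_cast
  rfl

/-- With `r_k = e^{−m/(2n_k)}` and `n_k → ∞`, the quantity
`n_k^{−θ} exp(θ V_{n_k}(r_k)/2)` converges to `e^{θγ} ∫_0^∞ e^{−my} p_θ(y) dy`,
where `V_n(r) = 2 ∑_{ℓ=1}^n r^{2ℓ}/ℓ`, `γ` is the Euler–Mascheroni constant, and
`p_θ` is the limiting density of `T_{0n}/n` for the Ewens/Poisson model. -/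
theorem normalized_variance_tendsto (θ : ℝ) (hθ : 0 < θ) (m : ℝ) (hm : 0 ≤ m)
    (μT : ℕ → Measure ℕ) (hprob : ∀ n, IsProbabilityMeasure (μT n))
    (hpgf : ∀ n : ℕ, 1 ≤ n → ∀ z ∈ Set.Ioc (0 : ℝ) 1,
      ∑' k : ℕ, z ^ k * (μT n {k}).toReal
        = ∏ j ∈ Finset.Icc 1 n, Real.exp ((θ / j) * (z ^ j - 1)))
    (p : ℝ → ℝ) (hpmeas : Measurable p) (hp0 : ∀ y, 0 ≤ p y)
    (hweak : ∀ f : ℝ → ℝ, Continuous f → (∃ Cb, ∀ x, |f x| ≤ Cb) →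
      Tendsto (fun n : ℕ => ∫ k, f ((k : ℝ) / n) ∂(μT n)) atTop
        (nhds (∫ y in Set.Ioi (0 : ℝ), f y * p y)))
    (nk : ℕ → ℕ) (hnk : Tendsto nk atTop atTop) :
    Tendsto
      (fun k : ℕ =>
        ((nk k : ℝ)) ^ (-θ) *
          Real.exp (θ *
            (2 * ∑ ℓ ∈ Finset.Icc 1 (nk k),
              (Real.exp (-(m / (2 * (nk k : ℝ))))) ^ (2 * ℓ) / ℓ) / 2))
      atTop
      (nhds (Real.exp (θ * Real.eulerMascheroniConstant) *
        ∫ y in Set.Ioi (0 : ℝ), Real.exp (-(m * y)) * p y)) := by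
  set f : ℝ → ℝ := fun y => Real.exp (-(m * max y 0)) with hfdef
  have hfc : Continuous f :=
    Real.continuous_exp.comp ((continuous_const.mul (continuous_id.max continuous_const)).neg)
  have hfb : ∀ x, |f x| ≤ 1 := by
    intro x
    rw [abs_of_pos (Real.exp_pos _)]
    apply Real.exp_le_one_iff.mpr
    simp only [neg_nonpos]
    exact mul_nonneg hm (le_max_right _ _)
  have hlim2 := hweak f hfc ⟨1, hfb⟩
  -- identify the limit integral
  have hInt : (∫ y in Set.Ioi (0:ℝ), f y * p y)
      = ∫ y in Set.Ioi (0:ℝ), Real.exp (-(m * y)) * p y := by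
    apply setIntegral_congr_fun measurableSet_Ioi
    intro y hy
    simp only [hfdef, max_eq_left (le_of_lt (Set.mem_Ioi.mp hy))]
  -- key identity for n ≥ 1
  have key : ∀ n : ℕ, 1 ≤ n →
      ((n : ℝ)) ^ (-θ) *
        Real.exp (θ * (2 * ∑ ℓ ∈ Finset.Icc 1 n,
          (Real.exp (-(m / (2 * (n : ℝ))))) ^ (2 * ℓ) / ℓ) / 2)
      = Real.exp (θ * (((harmonic n : ℚ) : ℝ) - Real.log n)) *
          ∫ k, f ((k : ℝ) / n) ∂(μT n) := by
    intro n hn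
    have hn0 : (0 : ℝ) < (n : ℝ) := by exact_mod_cast hn
    set z : ℝ := Real.exp (-(m / n)) with hzdef
    have hz : z ∈ Set.Ioc (0 : ℝ) 1 := by
      constructor
      · exact Real.exp_pos _
      · apply Real.exp_le_one_iff.mpr
        simp only [neg_nonpos]
        positivity
    have hpg := hpgf n hn z hz
    -- rewrite the product as exp of a sum
    rw [← Real.exp_sum] at hpg
    -- the sum in the LHS equals ∑ z^ℓ/ℓ
    have hsum : ∑ ℓ ∈ Finset.Icc 1 n,
        (Real.exp (-(m / (2 * (n : ℝ))))) ^ (2 * ℓ) / ℓ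
        = ∑ ℓ ∈ Finset.Icc 1 n, z ^ ℓ / ℓ := by
      apply Finset.sum_congr rfl
      intro ℓ _
      congr 1
      rw [← Real.exp_nat_mul, hzdef, ← Real.exp_nat_mul]
      congr 1
      push_cast
      field_simp
    -- the integral equals the tsum
    have hint : Integrable (fun k : ℕ => f ((k : ℝ) / n)) (μT n) := by
      have := hprob n
      refine (integrable_const (1:ℝ)).mono' measurable_from_top.aestronglyMeasurable ?_
      refine Filter.Eventually.of_forall fun k => ?_
      simpa [Real.norm_eq_abs] using hfb ((k : ℝ) / n)
    have hIeq : ∫ k, f ((k : ℝ) / n) ∂(μT n)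
        = ∑' k : ℕ, z ^ k * ((μT n) {k}).toReal := by
      rw [integral_countable' hint]
      apply tsum_congr
      intro k
      have hfk : f ((k : ℝ) / n) = z ^ k := by
        have hk0 : (0 : ℝ) ≤ (k : ℝ) / n := by positivity
        simp only [hfdef, max_eq_left hk0, hzdef, ← Real.exp_nat_mul]
        congr 1
        ring
      rw [hfk, smul_eq_mul, mul_comm]
      rfl
    rw [hIeq, hpg]
    -- now pure algebra with exponentials
    have hsum2 : ∑ j ∈ Finset.Icc 1 n, (θ / j) * (z ^ j - 1)
        = θ * (∑ j ∈ Finset.Icc 1 n, z ^ j / j)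
          - θ * (((harmonic n : ℚ) : ℝ)) := by
      rw [harmonic_cast_real, Finset.mul_sum, Finset.mul_sum, ← Finset.sum_sub_distrib]
      apply Finset.sum_congr rfl
      intro j _
      field_simp
    rw [hsum, Real.rpow_def_of_pos hn0, ← Real.exp_add, ← Real.exp_add, hsum2]
    congr 1
    ring
  -- the limit of the RHS
  have h1 : Tendsto (fun k : ℕ =>
      Real.exp (θ * (((harmonic (nk k) : ℚ) : ℝ) - Real.log (nk k)))) atTop
      (nhds (Real.exp (θ * Real.eulerMascheroniConstant))) := by
    have := (Real.tendsto_harmonic_sub_log.const_mul θ).comp hnk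
    exact (Real.continuous_exp.tendsto _).comp this
  have h2 : Tendsto (fun k : ℕ => ∫ j, f ((j : ℝ) / (nk k)) ∂(μT (nk k))) atTop
      (nhds (∫ y in Set.Ioi (0:ℝ), f y * p y)) := hlim2.comp hnk
  have hmain := h1.mul h2
  rw [hInt] at hmain
  apply hmain.congr'
  filter_upwards [hnk.eventually (eventually_ge_atTop 1)] with k hk
  exact (key (nk k) hk).symm
end
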